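/- arXiv:1910.02421 — 6 statements merged into one kernel-verified Lean document; each statement's English description precedes it below -/
import Mathlib

section
/- There is no function f : ℝ → ℝ such that |h_i(x) - f(x_i)| < 1/2 for all i ∈ [n] and all x ∈ [0,1]^n, where h : ℝ^n → ℝ^n is defined by h(x) = (∑_j x_j, ∑_j x_j, ..., ∑_j x_j) (i.e., h_i(x) = ∑_{j=1}^n x_j for each i). (Here n ≥ 2.) -/
/-- No single univariate function applied coordinatewise can approximate
`h(x) = (∑_j x_j, …, ∑_j x_j)` within 1/2 uniformly on `[0,1]^n` (n ≥ 2). -/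
theorem pointnet_not_universal (n : ℕ) (hn : 2 ≤ n) :
    ¬ ∃ f : ℝ → ℝ, ∀ x : Fin n → ℝ, (∀ i, x i ∈ Set.Icc (0 : ℝ) 1) →
      ∀ i : Fin n, |(∑ j, x j) - f (x i)| < 1 / 2 := by
  rintro ⟨f, hf⟩
  have h0 : (0 : ℕ) < n := by omega
  have h1 : (1 : ℕ) < n := by omega
  set i0 : Fin n := ⟨0, h0⟩
  set i1 : Fin n := ⟨1, h1⟩
  have hA := hf (fun _ => 0) (fun i => by simp) i0
  have hB := hf (Pi.single i0 1)
    (fun i => by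
      by_cases h : i = i0 <;> simp [h, Pi.single_apply]) i1
  simp only [Finset.sum_const, Pi.single_apply] at hA hB
  have hne : i1 ≠ i0 := by simp [i0, i1, Fin.ext_iff]
  rw [Finset.sum_eq_single i0 (fun b _ hb => by simp [Pi.single_apply, hb])
    (by simp)] at hB
  simp [hne] at hA hB
  have h1 := le_abs_self (1 - f 0)
  have h2 := le_abs_self (f 0)
  linarith
end

section
/- Let p : ℝ^(n×k) → ℝ be a polynomial invariant under permutations of the last n−1 rows of X ∈ ℝ^(n×k). Then p can be written as p(X) = ∑_{|α|≤n} x_1^α q_α(X), where each q_α : ℝ^(n×k) → ℝ is a polynomial invariant under the full symmetric group S_n acting on the rows of X. -/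
/-- Row-permutation action: `(σ · X) i = X (σ⁻¹ i)`. -/
def permRow {n k : ℕ} (σ : Equiv.Perm (Fin n)) (X : Fin n → Fin k → ℝ) :
    Fin n → Fin k → ℝ := fun i => X (σ⁻¹ i)

/-- Evaluation of a polynomial in the entries of `X`. -/
noncomputable def evalP {n k : ℕ} (X : Fin n → Fin k → ℝ) (p : MvPolynomial (Fin n × Fin k) ℝ) : ℝ :=
  MvPolynomial.eval (fun v => X v.1 v.2) p

namespace SnmAux

open Finset

abbrev RF (k m : ℕ) := (Fin m → Fin k → ℝ) → ℝ

def mon {k : ℕ} (v : Fin k → ℝ) (α : Fin k → ℕ) : ℝ := ∏ j, v j ^ α j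

lemma mon_zero {k : ℕ} (v : Fin k → ℝ) : mon v (0 : Fin k → ℕ) = 1 := by simp [mon]

lemma mon_add {k : ℕ} (v : Fin k → ℝ) (α β : Fin k → ℕ) :
    mon v (α + β) = mon v α * mon v β := by
  simp [mon, Pi.add_apply, pow_add, Finset.prod_mul_distrib]

def powF (k m : ℕ) (α : Fin k → ℕ) : RF k m := fun X => ∑ i, mon (X i) α

def mon0F (k m : ℕ) (α : Fin k → ℕ) : RF k (m+1) := fun X => mon (X 0) α

def PolyF (k m : ℕ) : Subalgebra ℝ (RF k m) where
  carrier := {f | ∃ P : MvPolynomial (Fin m × Fin k) ℝ, ∀ X, f X = evalP X P}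
  mul_mem' := by
    rintro f g ⟨P, hP⟩ ⟨Q, hQ⟩
    exact ⟨P * Q, fun X => by simp [Pi.mul_apply, hP X, hQ X, evalP]⟩
  add_mem' := by
    rintro f g ⟨P, hP⟩ ⟨Q, hQ⟩
    exact ⟨P + Q, fun X => by simp [Pi.add_apply, hP X, hQ X, evalP]⟩
  algebraMap_mem' := fun r => ⟨MvPolynomial.C r, fun X => by simp [evalP]⟩

def InvF (k m : ℕ) : Subalgebra ℝ (RF k m) where
  carrier := {f | ∀ (σ : Equiv.Perm (Fin m)) X, f (permRow σ X) = f X}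
  mul_mem' := fun hf hg σ X => by simp [Pi.mul_apply, hf σ X, hg σ X]
  add_mem' := fun hf hg σ X => by simp [Pi.add_apply, hf σ X, hg σ X]
  algebraMap_mem' := fun r σ X => rfl

def PSF (k m : ℕ) : Subalgebra ℝ (RF k m) := Algebra.adjoin ℝ (Set.range (powF k m))

lemma powF_mem_PolyF (k m : ℕ) (α : Fin k → ℕ) : powF k m α ∈ PolyF k m := by
  refine ⟨∑ i : Fin m, ∏ j : Fin k, (MvPolynomial.X (i, j) : MvPolynomial (Fin m × Fin k) ℝ) ^ α j,
    fun X => ?_⟩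
  simp [powF, evalP, mon, MvPolynomial.eval_prod]

lemma powF_mem_InvF (k m : ℕ) (α : Fin k → ℕ) : powF k m α ∈ InvF k m := by
  intro σ X
  show ∑ i, mon (X (σ⁻¹ i)) α = ∑ i, mon (X i) α
  exact Equiv.sum_comp σ⁻¹ (fun i => mon (X i) α)

lemma PSF_le_PolyF (k m : ℕ) : PSF k m ≤ PolyF k m :=
  Algebra.adjoin_le (by rintro _ ⟨α, rfl⟩; exact powF_mem_PolyF k m α)

lemma PSF_le_InvF (k m : ℕ) : PSF k m ≤ InvF k m :=
  Algebra.adjoin_le (by rintro _ ⟨α, rfl⟩; exact powF_mem_InvF k m α)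

def rescomp (k m : ℕ) : RF k m →ₐ[ℝ] RF k (m+1) where
  toFun g := fun X => g (fun i => X i.succ)
  map_one' := rfl
  map_mul' _ _ := rfl
  map_zero' := rfl
  map_add' _ _ := rfl
  commutes' _ := rfl

def DecSet (k m : ℕ) : Subalgebra ℝ (RF k (m+1)) where
  carrier := {f | ∃ (D : Finset (Fin k → ℕ)) (g : (Fin k → ℕ) → RF k (m+1)),
    (∀ α ∈ D, g α ∈ PSF k (m+1)) ∧ f = fun X => ∑ α ∈ D, mon (X 0) α * g α X}
  algebraMap_mem' := by
    intro r
    refine ⟨{0}, fun _ => algebraMap ℝ _ r, fun α _ => Subalgebra.algebraMap_mem _ r, ?_⟩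
    funext X
    simp [mon_zero]
  add_mem' := by
    rintro f g ⟨D₁, g₁, hg₁, rfl⟩ ⟨D₂, g₂, hg₂, rfl⟩
    classical
    refine ⟨D₁ ∪ D₂, fun α => (if α ∈ D₁ then g₁ α else 0) + (if α ∈ D₂ then g₂ α else 0),
      ?_, ?_⟩
    · intro α _
      refine add_mem ?_ ?_ <;> split_ifs with h
      · exact hg₁ α h
      · exact zero_mem _
      · exact hg₂ α h
      · exact zero_mem _
    · funext X
      have key : ∀ (D₁' D₂' : Finset (Fin k → ℕ)) (g' : (Fin k → ℕ) → RF k (m+1)),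
          (∑ α ∈ D₁' ∪ D₂', mon (X 0) α * (if α ∈ D₁' then g' α else 0) X)
            = ∑ α ∈ D₁', mon (X 0) α * g' α X := by
        intro D₁' D₂' g'
        have : ∀ α, mon (X 0) α * (if α ∈ D₁' then g' α else 0) X
            = if α ∈ D₁' then mon (X 0) α * g' α X else 0 := by
          intro α; split_ifs with h <;> simp
        simp only [this]
        rw [Finset.sum_ite_mem, Finset.union_inter_cancel_left]
      simp only [Pi.add_apply, mul_add]
      rw [Finset.sum_add_distrib, key D₁ D₂ g₁]
      rw [show D₁ ∪ D₂ = D₂ ∪ D₁ from Finset.union_comm _ _, key D₂ D₁ g₂]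
  mul_mem' := by
    rintro f g ⟨D₁, g₁, hg₁, rfl⟩ ⟨D₂, g₂, hg₂, rfl⟩
    classical
    refine ⟨(D₁ ×ˢ D₂).image (fun p => p.1 + p.2),
      fun γ => ∑ p ∈ (D₁ ×ˢ D₂).filter (fun p => p.1 + p.2 = γ), g₁ p.1 * g₂ p.2, ?_, ?_⟩
    · intro γ _
      refine sum_mem fun p hp => ?_
      obtain ⟨hp1, _⟩ := Finset.mem_filter.mp hp
      obtain ⟨h1, h2⟩ := Finset.mem_product.mp hp1
      exact mul_mem (hg₁ _ h1) (hg₂ _ h2)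
    · funext X
      show (∑ α ∈ D₁, mon (X 0) α * g₁ α X) * (∑ β ∈ D₂, mon (X 0) β * g₂ β X) = _
      rw [Finset.sum_mul_sum]
      have lhs : ∑ α ∈ D₁, ∑ β ∈ D₂, (mon (X 0) α * g₁ α X) * (mon (X 0) β * g₂ β X)
          = ∑ p ∈ D₁ ×ˢ D₂, mon (X 0) (p.1 + p.2) * (g₁ p.1 X * g₂ p.2 X) := by
        rw [Finset.sum_product]
        exact Finset.sum_congr rfl fun α _ => Finset.sum_congr rfl fun β _ => by
          rw [mon_add]; ring
      have fiber := Finset.sum_fiberwise_of_maps_to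
        (g := fun p : (Fin k → ℕ) × (Fin k → ℕ) => p.1 + p.2)
        (t := (D₁ ×ˢ D₂).image fun p => p.1 + p.2)
        (fun p hp => Finset.mem_image_of_mem _ hp)
        (fun p => mon (X 0) (p.1 + p.2) * (g₁ p.1 X * g₂ p.2 X))
      rw [lhs, ← fiber]
      refine Finset.sum_congr rfl fun γ _ => ?_
      simp only [Finset.sum_apply, Pi.mul_apply, Finset.mul_sum]
      refine Finset.sum_congr rfl fun p hp => ?_
      obtain ⟨_, hpγ⟩ := Finset.mem_filter.mp hp
      rw [← hpγ]

lemma powF_mem_PSF (k m : ℕ) (α : Fin k → ℕ) : powF k m α ∈ PSF k m :=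
  Algebra.subset_adjoin ⟨α, rfl⟩

lemma PSF_le_DecSet (k m : ℕ) : PSF k (m+1) ≤ DecSet k m := by
  intro f hf
  refine ⟨{0}, fun _ => f, fun _ _ => hf, ?_⟩
  funext X
  simp [mon_zero]

lemma mon0F_mem_DecSet (k m : ℕ) (α : Fin k → ℕ) : mon0F k m α ∈ DecSet k m := by
  refine ⟨{α}, fun _ => 1, fun _ _ => one_mem _, ?_⟩
  funext X
  simp [mon0F]

lemma rescomp_powF (k m : ℕ) (α : Fin k → ℕ) :
    rescomp k m (powF k m α) = powF k (m+1) α - mon0F k m α := by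
  funext X
  show ∑ i : Fin m, mon (X i.succ) α = (∑ i : Fin (m+1), mon (X i) α) - mon (X 0) α
  rw [Fin.sum_univ_succ]
  ring

lemma map_PSF_le (k m : ℕ) : (PSF k m).map (rescomp k m) ≤ DecSet k m := by
  rw [PSF, AlgHom.map_adjoin]
  apply Algebra.adjoin_le
  rintro _ ⟨_, ⟨α, rfl⟩, rfl⟩
  rw [rescomp_powF]
  exact sub_mem (PSF_le_DecSet k m (Algebra.subset_adjoin ⟨α, rfl⟩)) (mon0F_mem_DecSet k m α)
lemma mon_ext {k : ℕ} {D : Finset (Fin k → ℕ)} {r s : (Fin k → ℕ) → ℝ}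
    (h : ∀ t : Fin k → ℝ, ∑ β ∈ D, mon t β * r β = ∑ β ∈ D, mon t β * s β) :
    ∀ β ∈ D, r β = s β := by
  classical
  intro β₀ hβ₀
  set e : (Fin k → ℕ) → (Fin k →₀ ℕ) := fun β => Finsupp.equivFunOnFinite.symm β with he'
  have he : Function.Injective e := Finsupp.equivFunOnFinite.symm.injective
  have hmon : ∀ (t : Fin k → ℝ) β,
      MvPolynomial.eval t (MvPolynomial.monomial (e β) (1 : ℝ)) = mon t β := by
    intro t β
    rw [MvPolynomial.eval_monomial, one_mul, Finsupp.prod_pow]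
    rfl
  have hp : (∑ β ∈ D, MvPolynomial.C (r β) * MvPolynomial.monomial (e β) (1 : ℝ)) =
      ∑ β ∈ D, MvPolynomial.C (s β) * MvPolynomial.monomial (e β) (1 : ℝ) := by
    apply MvPolynomial.funext
    intro t
    simp only [map_sum, MvPolynomial.eval_mul, MvPolynomial.eval_C, hmon]
    simpa [mul_comm] using h t
  have hcoeff := congrArg (MvPolynomial.coeff (e β₀)) hp
  simp only [MvPolynomial.coeff_sum, MvPolynomial.coeff_C_mul, MvPolynomial.coeff_monomial,
    he.eq_iff, mul_ite, mul_one, mul_zero] at hcoeff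
  simp only [Finset.sum_ite_eq', if_pos hβ₀] at hcoeff
  exact hcoeff

lemma split {k : ℕ} (m : ℕ) (P : MvPolynomial (Fin (m+1) × Fin k) ℝ) :
    ∃ (S : Finset (Fin k → ℕ)) (c : (Fin k → ℕ) → MvPolynomial (Fin m × Fin k) ℝ),
      ∀ (t : Fin k → ℝ) (X' : Fin m → Fin k → ℝ),
        evalP (Fin.cons t X') P = ∑ β ∈ S, mon t β * evalP X' (c β) := by
  classical
  set φ : ((Fin (m+1) × Fin k) →₀ ℕ) → (Fin k → ℕ) := fun u j => u (0, j) with hφ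
  refine ⟨P.support.image φ, fun β => ∑ u ∈ P.support.filter (fun u => φ u = β),
      MvPolynomial.C (MvPolynomial.coeff u P) *
        ∏ q : Fin m × Fin k,
          (MvPolynomial.X (q.1, q.2) : MvPolynomial (Fin m × Fin k) ℝ) ^ u (q.1.succ, q.2), ?_⟩
  intro t X'
  have hEval : evalP (Fin.cons t X') P = ∑ u ∈ P.support, MvPolynomial.coeff u P *
      (mon t (φ u) * ∏ q : Fin m × Fin k, X' q.1 q.2 ^ u (q.1.succ, q.2)) := by
    rw [evalP, MvPolynomial.eval_eq']
    refine Finset.sum_congr rfl fun u _ => ?_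
    congr 1
    simp only [Fintype.prod_prod_type]
    rw [Fin.prod_univ_succ]
    simp [mon, hφ]
  have hc : ∀ β, evalP X' (∑ u ∈ P.support.filter (fun u => φ u = β),
      MvPolynomial.C (MvPolynomial.coeff u P) *
        ∏ q : Fin m × Fin k,
          (MvPolynomial.X (q.1, q.2) : MvPolynomial (Fin m × Fin k) ℝ) ^ u (q.1.succ, q.2))
      = ∑ u ∈ P.support.filter (fun u => φ u = β),
          MvPolynomial.coeff u P * ∏ q : Fin m × Fin k, X' q.1 q.2 ^ u (q.1.succ, q.2) := by
    intro β
    rw [evalP, map_sum]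
    refine Finset.sum_congr rfl fun u _ => ?_
    simp [MvPolynomial.eval_prod]
  have fiber := Finset.sum_fiberwise_of_maps_to (g := φ)
    (t := P.support.image φ)
    (fun u hu => Finset.mem_image_of_mem _ hu)
    (fun u => MvPolynomial.coeff u P *
      (mon t (φ u) * ∏ q : Fin m × Fin k, X' q.1 q.2 ^ u (q.1.succ, q.2)))
  rw [hEval, ← fiber]
  refine Finset.sum_congr rfl fun β _ => ?_
  rw [hc β, Finset.mul_sum]
  refine Finset.sum_congr rfl fun u hu => ?_
  obtain ⟨_, huβ⟩ := Finset.mem_filter.mp hu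
  rw [← huβ]
  ring

def liftPerm {m : ℕ} (σ : Equiv.Perm (Fin m)) : Equiv.Perm (Fin (m+1)) :=
  Equiv.Perm.decomposeFin.symm (0, σ)

lemma liftPerm_zero {m : ℕ} (σ : Equiv.Perm (Fin m)) : liftPerm σ 0 = 0 :=
  Equiv.Perm.decomposeFin_symm_apply_zero 0 σ

lemma liftPerm_succ {m : ℕ} (σ : Equiv.Perm (Fin m)) (i : Fin m) :
    liftPerm σ i.succ = (σ i).succ := by
  rw [liftPerm, Equiv.Perm.decomposeFin_symm_apply_succ]
  simp

lemma liftPerm_inv {m : ℕ} (σ : Equiv.Perm (Fin m)) : (liftPerm σ)⁻¹ = liftPerm σ⁻¹ := by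
  have h : liftPerm σ * liftPerm σ⁻¹ = 1 := by
    ext i
    refine Fin.cases ?_ ?_ i
    · simp [Equiv.Perm.mul_apply, liftPerm_zero]
    · intro j
      simp [Equiv.Perm.mul_apply, liftPerm_succ]
  exact inv_eq_of_mul_eq_one_right h

lemma permRow_lift {k m : ℕ} (σ : Equiv.Perm (Fin m)) (t : Fin k → ℝ)
    (X' : Fin m → Fin k → ℝ) :
    permRow (liftPerm σ) (Fin.cons t X') = Fin.cons t (permRow σ X') := by
  funext i
  refine Fin.cases ?_ ?_ i
  · show (Fin.cons t X' : Fin (m+1) → Fin k → ℝ) ((liftPerm σ)⁻¹ 0) = t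
    rw [liftPerm_inv, liftPerm_zero]
    simp
  · intro j
    show (Fin.cons t X' : Fin (m+1) → Fin k → ℝ) ((liftPerm σ)⁻¹ j.succ) = _
    rw [liftPerm_inv, liftPerm_succ]
    simp [permRow]
lemma assemble {k : ℕ} (m : ℕ) (P : MvPolynomial (Fin (m+1) × Fin k) ℝ)
    (S : Finset (Fin k → ℕ)) (c : (Fin k → ℕ) → MvPolynomial (Fin m × Fin k) ℝ)
    (hc : ∀ (t : Fin k → ℝ) (X' : Fin m → Fin k → ℝ),
      evalP (Fin.cons t X') P = ∑ β ∈ S, mon t β * evalP X' (c β))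
    (hPS : ∀ β ∈ S, (fun X' => evalP X' (c β)) ∈ PSF k m) :
    (fun X => evalP X P) ∈ DecSet k m := by
  have hfeq : (fun X => evalP X P) =
      ∑ β ∈ S, mon0F k m β * rescomp k m (fun X' => evalP X' (c β)) := by
    funext X
    rw [Finset.sum_apply]
    have hX : Fin.cons (X 0) (Fin.tail X) = X := Fin.cons_self_tail X
    calc evalP X P = evalP (Fin.cons (X 0) (Fin.tail X)) P := by rw [hX]
      _ = ∑ β ∈ S, mon (X 0) β * evalP (Fin.tail X) (c β) := hc (X 0) (Fin.tail X)
      _ = ∑ β ∈ S, (mon0F k m β * rescomp k m (fun X' => evalP X' (c β))) X := rfl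
  rw [hfeq]
  exact sum_mem fun β hβ =>
    mul_mem (mon0F_mem_DecSet k m β) (map_PSF_le k m (Subalgebra.mem_map.mpr ⟨_, hPS β hβ, rfl⟩))

theorem thmA (k : ℕ) : ∀ (m : ℕ) (f : RF k m), f ∈ PolyF k m → f ∈ InvF k m → f ∈ PSF k m := by
  intro m
  induction m with
  | zero =>
    intro f _ _
    have hf : f = algebraMap ℝ (RF k 0) (f default) := by
      funext X
      have hX : X = default := funext fun i => i.elim0
      rw [hX]
      rfl
    rw [hf]
    exact Subalgebra.algebraMap_mem _ _
  | succ m IH =>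
    intro f hp hi
    obtain ⟨P, hP⟩ := hp
    obtain ⟨S, c, hc⟩ := split m P
    have hcInv : ∀ β ∈ S, (fun X' => evalP X' (c β)) ∈ InvF k m := by
      intro β hβ σ X'
      refine mon_ext (D := S) (r := fun β => evalP (permRow σ X') (c β))
        (s := fun β => evalP X' (c β)) ?_ β hβ
      intro t
      calc ∑ β ∈ S, mon t β * evalP (permRow σ X') (c β)
          = evalP (Fin.cons t (permRow σ X')) P := (hc t _).symm
        _ = evalP (permRow (liftPerm σ) (Fin.cons t X')) P := by rw [permRow_lift]
        _ = f (permRow (liftPerm σ) (Fin.cons t X')) := (hP _).symm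
        _ = f (Fin.cons t X') := hi (liftPerm σ) _
        _ = ∑ β ∈ S, mon t β * evalP X' (c β) := by rw [hP, hc]
    have hcPS : ∀ β ∈ S, (fun X' => evalP X' (c β)) ∈ PSF k m :=
      fun β hβ => IH _ ⟨c β, fun _ => rfl⟩ (hcInv β hβ)
    have hfP : f = fun X => evalP X P := funext hP
    have hfDec : f ∈ DecSet k m := hfP ▸ assemble m P S c hc hcPS
    obtain ⟨D, g, hg, hfg⟩ := hfDec
    have h1 : ∀ (i : Fin (m+1)) X, f X = ∑ α ∈ D, mon (X i) α * g α X := by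
      intro i X
      have hswap := hi (Equiv.swap 0 i) X
      rw [← hswap, hfg]
      have h0 : permRow (Equiv.swap 0 i) X 0 = X i := by
        show X ((Equiv.swap 0 i)⁻¹ 0) = X i
        rw [Equiv.swap_inv, Equiv.swap_apply_left]
      refine Finset.sum_congr rfl fun α hα => ?_
      rw [h0, PSF_le_InvF k (m+1) (hg α hα) (Equiv.swap 0 i) X]
    have hswap : ∀ X, ((m+1 : ℕ) : ℝ) * f X = ∑ α ∈ D, powF k (m+1) α X * g α X := by
      intro X
      calc ((m+1 : ℕ) : ℝ) * f X = ∑ _i : Fin (m+1), f X := by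
            rw [Finset.sum_const, card_univ, Fintype.card_fin, nsmul_eq_mul]
        _ = ∑ i : Fin (m+1), ∑ α ∈ D, mon (X i) α * g α X :=
            Finset.sum_congr rfl fun i _ => h1 i X
        _ = ∑ α ∈ D, ∑ i : Fin (m+1), mon (X i) α * g α X := Finset.sum_comm
        _ = ∑ α ∈ D, powF k (m+1) α X * g α X := by
            refine Finset.sum_congr rfl fun α _ => ?_
            rw [powF, Finset.sum_mul]
    have hfe : f = ((m+1 : ℕ) : ℝ)⁻¹ • ∑ α ∈ D, powF k (m+1) α * g α := by
      funext X
      rw [Pi.smul_apply, Finset.sum_apply]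
      simp only [Pi.mul_apply]
      rw [← hswap X, smul_eq_mul, ← mul_assoc,
        inv_mul_cancel₀ (by exact_mod_cast Nat.succ_ne_zero m), one_mul]
    rw [hfe]
    exact Subalgebra.smul_mem _
      (sum_mem fun α hα => mul_mem (powF_mem_PSF k (m+1) α) (hg α hα)) _
noncomputable def Inv2 (k m : ℕ) : Subalgebra ℝ (RF k (m+1)) := PolyF k (m+1) ⊓ InvF k (m+1)

def DecB (k m : ℕ) (f : RF k (m+1)) : Prop :=
  ∃ (D : Finset (Fin k → ℕ)) (g : (Fin k → ℕ) → RF k (m+1)),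
    (∀ α ∈ D, ∑ j, α j ≤ m + 1) ∧ (∀ α ∈ D, g α ∈ Inv2 k m) ∧
    f = fun X => ∑ α ∈ D, mon (X 0) α * g α X

lemma decB_zero (k m : ℕ) : DecB k m 0 := by
  refine ⟨∅, fun _ => 0, by simp, by simp, ?_⟩
  funext X
  simp

lemma decB_add {k m : ℕ} {f g : RF k (m+1)} (hf : DecB k m f) (hg : DecB k m g) :
    DecB k m (f + g) := by
  classical
  obtain ⟨D₁, g₁, hb₁, hg₁, rfl⟩ := hf
  obtain ⟨D₂, g₂, hb₂, hg₂, rfl⟩ := hg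
  refine ⟨D₁ ∪ D₂, fun α => (if α ∈ D₁ then g₁ α else 0) + (if α ∈ D₂ then g₂ α else 0),
    ?_, ?_, ?_⟩
  · intro α hα
    rcases Finset.mem_union.mp hα with h | h
    exacts [hb₁ α h, hb₂ α h]
  · intro α _
    refine add_mem ?_ ?_ <;> split_ifs with h
    · exact hg₁ α h
    · exact zero_mem _
    · exact hg₂ α h
    · exact zero_mem _
  · funext X
    have key : ∀ (D₁' D₂' : Finset (Fin k → ℕ)) (g' : (Fin k → ℕ) → RF k (m+1)),
        (∑ α ∈ D₁' ∪ D₂', mon (X 0) α * (if α ∈ D₁' then g' α else 0) X)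
          = ∑ α ∈ D₁', mon (X 0) α * g' α X := by
      intro D₁' D₂' g'
      have h1 : ∀ α, mon (X 0) α * (if α ∈ D₁' then g' α else 0) X
          = if α ∈ D₁' then mon (X 0) α * g' α X else 0 := by
        intro α; split_ifs with h <;> simp
      simp only [h1]
      rw [Finset.sum_ite_mem, Finset.union_inter_cancel_left]
    simp only [Pi.add_apply, mul_add]
    rw [Finset.sum_add_distrib, key D₁ D₂ g₁]
    rw [show D₁ ∪ D₂ = D₂ ∪ D₁ from Finset.union_comm _ _, key D₂ D₁ g₂]

lemma decB_smul {k m : ℕ} (r : ℝ) {f : RF k (m+1)} (hf : DecB k m f) : DecB k m (r • f) := by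
  obtain ⟨D, g, hb, hg, rfl⟩ := hf
  refine ⟨D, fun α => r • g α, hb, fun α hα => Subalgebra.smul_mem _ (hg α hα) r, ?_⟩
  funext X
  simp only [Pi.smul_apply, smul_eq_mul, Finset.mul_sum]
  exact Finset.sum_congr rfl fun α _ => by ring

lemma decB_mul_left_inv {k m : ℕ} {h f : RF k (m+1)} (hh : h ∈ Inv2 k m)
    (hf : DecB k m f) : DecB k m (h * f) := by
  obtain ⟨D, g, hb, hg, rfl⟩ := hf
  refine ⟨D, fun α => h * g α, hb, fun α hα => mul_mem hh (hg α hα), ?_⟩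
  funext X
  simp only [Pi.mul_apply, Finset.mul_sum]
  exact Finset.sum_congr rfl fun α _ => by ring

lemma decB_sum {k m : ℕ} {ι : Type*} (s : Finset ι) (F : ι → RF k (m+1))
    (h : ∀ i ∈ s, DecB k m (F i)) : DecB k m (∑ i ∈ s, F i) :=
  Finset.sum_induction F (DecB k m) (fun _ _ ha hb => decB_add ha hb) (decB_zero k m) h

lemma decB_monSmall {k m : ℕ} {β : Fin k → ℕ} (hβ : ∑ j, β j ≤ m + 1) :
    DecB k m (mon0F k m β) := by
  refine ⟨{β}, fun _ => 1, by simpa, fun _ _ => one_mem _, ?_⟩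
  funext X
  simp [mon0F]

def linF (k m : ℕ) (c : Fin k → ℝ) (i : Fin m) : RF k m := fun X => ∑ j, c j * X i j

lemma linF_mem_PolyF (k m : ℕ) (c : Fin k → ℝ) (i : Fin m) : linF k m c i ∈ PolyF k m := by
  refine ⟨∑ j : Fin k, MvPolynomial.C (c j) * MvPolynomial.X (i, j), fun X => ?_⟩
  simp [linF, evalP]
lemma charRed (k m : ℕ) (c : Fin k → ℝ) :
    ∃ e : ℕ → RF k (m+1), (∀ r, e r ∈ Inv2 k m) ∧
      ∀ X, (linF k (m+1) c 0 X) ^ (m+1) =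
        ∑ r ∈ Finset.range (m+1), e r X * (linF k (m+1) c 0 X) ^ r := by
  classical
  set QA : Polynomial ↥(PolyF k (m+1)) :=
    ∏ i : Fin (m+1), (Polynomial.X - Polynomial.C ⟨linF k (m+1) c i, linF_mem_PolyF k (m+1) c i⟩)
    with hQA
  set Q : Polynomial (RF k (m+1)) := QA.map ((PolyF k (m+1)).val.toRingHom) with hQdef
  have hQ : Q = ∏ i : Fin (m+1), (Polynomial.X - Polynomial.C (linF k (m+1) c i)) := by
    rw [hQdef, hQA, Polynomial.map_prod]
    refine Finset.prod_congr rfl fun i _ => ?_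
    rw [Polynomial.map_sub, Polynomial.map_X, Polynomial.map_C]
    rfl
  have hcoeffPoly : ∀ r, Q.coeff r ∈ PolyF k (m+1) := by
    intro r
    rw [hQdef, Polynomial.coeff_map]
    exact (QA.coeff r).2
  have hmapX : ∀ X : Fin (m+1) → Fin k → ℝ,
      Q.map (Pi.evalRingHom (fun _ => ℝ) X) =
        ∏ i : Fin (m+1), (Polynomial.X - Polynomial.C (linF k (m+1) c i X)) := by
    intro X
    rw [hQ, Polynomial.map_prod]
    refine Finset.prod_congr rfl fun i _ => ?_
    rw [Polynomial.map_sub, Polynomial.map_X, Polynomial.map_C]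
    rfl
  have hcoeffX : ∀ (r : ℕ) (X : Fin (m+1) → Fin k → ℝ),
      Q.coeff r X = (∏ i : Fin (m+1),
        (Polynomial.X - Polynomial.C (linF k (m+1) c i X))).coeff r := by
    intro r X
    conv_lhs => rw [show Q.coeff r X = (Pi.evalRingHom (fun _ => ℝ) X) (Q.coeff r) from rfl,
      ← Polynomial.coeff_map]
    rw [hmapX X]
  have hinvQ : ∀ r, Q.coeff r ∈ InvF k (m+1) := by
    intro r σ X
    rw [hcoeffX r (permRow σ X), hcoeffX r X]
    congr 1
    have hfac : ∀ i, linF k (m+1) c i (permRow σ X) = linF k (m+1) c (σ⁻¹ i) X := fun i => rfl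
    calc ∏ i : Fin (m+1), (Polynomial.X - Polynomial.C (linF k (m+1) c i (permRow σ X)))
        = ∏ i : Fin (m+1), (Polynomial.X - Polynomial.C (linF k (m+1) c (σ⁻¹ i) X)) := by
          simp only [hfac]
      _ = ∏ i : Fin (m+1), (Polynomial.X - Polynomial.C (linF k (m+1) c i X)) :=
          Equiv.prod_comp σ⁻¹ (fun i => Polynomial.X - Polynomial.C (linF k (m+1) c i X))
  refine ⟨fun r => -(Q.coeff r), fun r => neg_mem ⟨hcoeffPoly r, hinvQ r⟩, ?_⟩
  intro X
  set PX : Polynomial ℝ :=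
    ∏ i : Fin (m+1), (Polynomial.X - Polynomial.C (linF k (m+1) c i X)) with hPX
  have hmonic : PX.Monic :=
    Polynomial.monic_prod_of_monic _ _ fun i _ => Polynomial.monic_X_sub_C _
  have hdeg : PX.natDegree = m + 1 := by
    rw [hPX, Polynomial.natDegree_prod_of_monic _ _ fun i _ => Polynomial.monic_X_sub_C _]
    simp
  have hroot : PX.eval (linF k (m+1) c 0 X) = 0 := by
    rw [hPX, Polynomial.eval_prod]
    refine Finset.prod_eq_zero (Finset.mem_univ 0) ?_
    simp
  have hexp := Polynomial.eval_eq_sum_range (p := PX) (linF k (m+1) c 0 X)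
  rw [hroot, hdeg, Finset.sum_range_succ] at hexp
  have hlead : PX.coeff (m+1) = 1 := by
    rw [← hdeg]
    exact hmonic.coeff_natDegree
  rw [hlead, one_mul] at hexp
  have hmain : (linF k (m+1) c 0 X) ^ (m+1) =
      ∑ r ∈ Finset.range (m+1), -(PX.coeff r) * (linF k (m+1) c 0 X) ^ r := by
    have h2 : ∑ r ∈ Finset.range (m+1), -(PX.coeff r) * (linF k (m+1) c 0 X) ^ r
        = -∑ r ∈ Finset.range (m+1), PX.coeff r * (linF k (m+1) c 0 X) ^ r := by
      simp [neg_mul]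
    rw [h2]
    linarith
  rw [hmain]
  refine Finset.sum_congr rfl fun r _ => ?_
  show _ = (-(Q.coeff r)) X * linF k (m+1) c 0 X ^ r
  rw [Pi.neg_apply, hcoeffX r X, ← hPX]
set_option synthInstance.maxHeartbeats 1000000 in
lemma polar (k d : ℕ) (β : Fin k → ℕ) (hβ : ∑ j, β j = d) :
    (fun v : Fin k → ℝ => mon v β) ∈ Submodule.span ℝ
      {w : (Fin k → ℝ) → ℝ | ∃ c : Fin k → ℝ, w = fun v => (∑ j, c j * v j) ^ d} := by
  classical
  by_contra hmem
  obtain ⟨φ, hφx, hφmap⟩ := Submodule.exists_dual_map_eq_bot_of_notMem hmem inferInstance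
  have hφ0 : ∀ c : Fin k → ℝ, φ (fun v => (∑ j, c j * v j) ^ d) = 0 := by
    intro c
    have hwmem : (fun v : Fin k → ℝ => (∑ j, c j * v j) ^ d) ∈ Submodule.span ℝ
        {w : (Fin k → ℝ) → ℝ | ∃ c : Fin k → ℝ, w = fun v => (∑ j, c j * v j) ^ d} :=
      Submodule.subset_span ⟨c, rfl⟩
    have h2 : φ (fun v => (∑ j, c j * v j) ^ d) ∈
        (Submodule.span ℝ {w : (Fin k → ℝ) → ℝ |
          ∃ c : Fin k → ℝ, w = fun v => (∑ j, c j * v j) ^ d}).map φ :=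
      Submodule.mem_map_of_mem hwmem
    rw [hφmap] at h2
    simpa using h2
  have hexp : ∀ c : Fin k → ℝ, (fun v : Fin k → ℝ => (∑ j, c j * v j) ^ d) =
      ∑ γ ∈ Finset.piAntidiag Finset.univ d,
        ((Nat.multinomial Finset.univ γ : ℝ) * mon c γ) • (fun v : Fin k → ℝ => mon v γ) := by
    intro c
    funext v
    rw [Finset.sum_apply, Finset.sum_pow_eq_sum_piAntidiag]
    refine Finset.sum_congr rfl fun γ _ => ?_
    simp only [Pi.smul_apply, smul_eq_mul, mon, mul_pow, Finset.prod_mul_distrib]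
    ring
  have hcoeff : ∀ γ ∈ Finset.piAntidiag Finset.univ d,
      (Nat.multinomial Finset.univ γ : ℝ) * φ (fun v : Fin k → ℝ => mon v γ) = 0 := by
    have h := mon_ext (D := Finset.piAntidiag Finset.univ d)
      (r := fun γ => (Nat.multinomial Finset.univ γ : ℝ) * φ (fun v : Fin k → ℝ => mon v γ))
      (s := fun _ => 0) ?_
    · intro γ hγ
      simpa using h γ hγ
    · intro t
      have h3 : φ (fun v : Fin k → ℝ => (∑ j, t j * v j) ^ d) = 0 := hφ0 t
      rw [hexp t, map_sum] at h3
      simp only [map_smul, smul_eq_mul] at h3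
      calc ∑ γ ∈ Finset.piAntidiag Finset.univ d,
            mon t γ * ((Nat.multinomial Finset.univ γ : ℝ) * φ (fun v : Fin k → ℝ => mon v γ))
          = ∑ γ ∈ Finset.piAntidiag Finset.univ d,
            (Nat.multinomial Finset.univ γ : ℝ) * mon t γ * φ (fun v : Fin k → ℝ => mon v γ) := by
            exact Finset.sum_congr rfl fun γ _ => by ring
        _ = 0 := h3
        _ = ∑ γ ∈ Finset.piAntidiag Finset.univ d, mon t γ * 0 := by simp
  have hβmem : β ∈ Finset.piAntidiag Finset.univ d := by
    rw [Finset.mem_piAntidiag]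
    exact ⟨hβ, fun i _ => Finset.mem_univ i⟩
  have hfin := hcoeff β hβmem
  have hmult : (Nat.multinomial Finset.univ β : ℝ) ≠ 0 :=
    Nat.cast_ne_zero.mpr (Nat.multinomial_pos _ _).ne'
  rcases mul_eq_zero.mp hfin with h | h
  · exact hmult h
  · exact hφx h
lemma PSF_le_Inv2 (k m : ℕ) : PSF k (m+1) ≤ Inv2 k m :=
  fun _ hf => ⟨PSF_le_PolyF k (m+1) hf, PSF_le_InvF k (m+1) hf⟩

lemma decB_mon0F (k m : ℕ) : ∀ (d : ℕ) (β : Fin k → ℕ), ∑ j, β j = d →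
    DecB k m (mon0F k m β) := by
  intro d
  induction d using Nat.strong_induction_on with
  | _ d IH =>
  intro β hβ
  by_cases hd : d ≤ m + 1
  · exact decB_monSmall (hβ ▸ hd)
  push_neg at hd
  have hlin : ∀ (d' : ℕ), d' < d → ∀ c : Fin k → ℝ,
      DecB k m (fun X => (linF k (m+1) c 0 X) ^ d') := by
    intro d' hd' c
    have heq : (fun X : Fin (m+1) → Fin k → ℝ => (linF k (m+1) c 0 X) ^ d') =
        ∑ γ ∈ Finset.piAntidiag Finset.univ d',
          ((Nat.multinomial Finset.univ γ : ℝ) * mon c γ) • mon0F k m γ := by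
      funext X
      rw [Finset.sum_apply, linF, Finset.sum_pow_eq_sum_piAntidiag]
      refine Finset.sum_congr rfl fun γ _ => ?_
      simp only [Pi.smul_apply, smul_eq_mul, mon0F, mon, mul_pow, Finset.prod_mul_distrib]
      ring
    rw [heq]
    refine decB_sum _ _ fun γ hγ => ?_
    have hγsum : ∑ j, γ j = d' := (Finset.mem_piAntidiag.mp hγ).1
    exact decB_smul _ (IH d' hd' γ hγsum)
  obtain ⟨N, lam, w, hw⟩ := Submodule.mem_span_set'.mp (polar k d β hβ)
  have hrep : mon0F k m β =
      ∑ i : Fin N, lam i • (fun X : Fin (m+1) → Fin k → ℝ => (w i : (Fin k → ℝ) → ℝ) (X 0)) := by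
    funext X
    have := congrFun hw (X 0)
    rw [Finset.sum_apply] at this ⊢
    simpa [mon0F] using this.symm
  rw [hrep]
  refine decB_sum _ _ fun i _ => decB_smul _ ?_
  obtain ⟨c, hc⟩ := (w i).2
  have hwc : (fun X : Fin (m+1) → Fin k → ℝ => (w i : (Fin k → ℝ) → ℝ) (X 0)) =
      fun X => (linF k (m+1) c 0 X) ^ d := by
    funext X
    rw [hc]
    rfl
  rw [hwc]
  obtain ⟨e, he, hred⟩ := charRed k m c
  have hsplit : (fun X : Fin (m+1) → Fin k → ℝ => (linF k (m+1) c 0 X) ^ d) =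
      ∑ r ∈ Finset.range (m+1), e r * (fun X => (linF k (m+1) c 0 X) ^ (r + (d - (m+1)))) := by
    funext X
    rw [Finset.sum_apply]
    have hd2 : d = (m+1) + (d - (m+1)) := by omega
    calc (linF k (m+1) c 0 X) ^ d
        = (linF k (m+1) c 0 X) ^ (m+1) * (linF k (m+1) c 0 X) ^ (d - (m+1)) := by
          rw [← pow_add, ← hd2]
      _ = (∑ r ∈ Finset.range (m+1), e r X * (linF k (m+1) c 0 X) ^ r) *
            (linF k (m+1) c 0 X) ^ (d - (m+1)) := by rw [hred X]
      _ = ∑ r ∈ Finset.range (m+1),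
            (e r * fun X => (linF k (m+1) c 0 X) ^ (r + (d - (m+1)))) X := by
          rw [Finset.sum_mul]
          refine Finset.sum_congr rfl fun r _ => ?_
          rw [Pi.mul_apply, mul_assoc, ← pow_add]
  rw [hsplit]
  refine decB_sum _ _ fun r hr => ?_
  have hrlt : r + (d - (m+1)) < d := by
    have := Finset.mem_range.mp hr
    omega
  exact decB_mul_left_inv (he r) (hlin _ hrlt c)

lemma decB_of_DecSet {k m : ℕ} {f : RF k (m+1)} (hf : f ∈ DecSet k m) : DecB k m f := by
  obtain ⟨D, g, hg, rfl⟩ := hf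
  have hsum : (fun X : Fin (m+1) → Fin k → ℝ => ∑ α ∈ D, mon (X 0) α * g α X) =
      ∑ α ∈ D, mon0F k m α * g α := by
    funext X
    rw [Finset.sum_apply]
    rfl
  rw [hsum]
  refine decB_sum _ _ fun α hα => ?_
  have h1 : DecB k m (g α * mon0F k m α) :=
    decB_mul_left_inv (PSF_le_Inv2 k m (hg α hα)) (decB_mon0F k m (∑ j, α j) α rfl)
  rwa [mul_comm] at h1

end SnmAux

open SnmAux

/-- Every polynomial invariant under permutations of the last `n-1` rows can be
written as `p(X) = ∑_{|α| ≤ n} x_1^α q_α(X)` with each `q_α` invariant under the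
full symmetric group acting on the rows. -/
theorem Snm1_invariant_poly_decomposition (n k : ℕ) [NeZero n]
    (p : MvPolynomial (Fin n × Fin k) ℝ)
    (hinv : ∀ σ : Equiv.Perm (Fin n), σ 0 = 0 → ∀ X : Fin n → Fin k → ℝ,
      evalP (permRow σ X) p = evalP X p) :
    ∃ (D : Finset (Fin k → ℕ)) (q : (Fin k → ℕ) → MvPolynomial (Fin n × Fin k) ℝ),
      (∀ α ∈ D, ∑ j, α j ≤ n) ∧
      (∀ α ∈ D, ∀ (σ : Equiv.Perm (Fin n)) (X : Fin n → Fin k → ℝ),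
        evalP (permRow σ X) (q α) = evalP X (q α)) ∧
      (∀ X : Fin n → Fin k → ℝ,
        evalP X p = ∑ α ∈ D, (∏ j, X 0 j ^ α j) * evalP X (q α)) := by
  classical
  obtain ⟨m, rfl⟩ := Nat.exists_eq_succ_of_ne_zero (NeZero.ne n)
  obtain ⟨S, c, hc⟩ := split m p
  have hcInv : ∀ β ∈ S, (fun X' => evalP X' (c β)) ∈ InvF k m := by
    intro β hβ σ X'
    refine mon_ext (D := S) (r := fun β => evalP (permRow σ X') (c β))
      (s := fun β => evalP X' (c β)) ?_ β hβ
    intro t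
    calc ∑ β ∈ S, mon t β * evalP (permRow σ X') (c β)
        = evalP (Fin.cons t (permRow σ X')) p := (hc t _).symm
      _ = evalP (permRow (liftPerm σ) (Fin.cons t X')) p := by rw [permRow_lift]
      _ = evalP (Fin.cons t X') p := hinv (liftPerm σ) (liftPerm_zero σ) _
      _ = ∑ β ∈ S, mon t β * evalP X' (c β) := hc t X'
  have hcPS : ∀ β ∈ S, (fun X' => evalP X' (c β)) ∈ PSF k m :=
    fun β hβ => thmA k m _ ⟨c β, fun _ => rfl⟩ (hcInv β hβ)
  have hfDec : (fun X => evalP X p) ∈ DecSet k m := assemble m p S c hc hcPS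
  obtain ⟨D, g, hbound, hg, hfg⟩ := decB_of_DecSet hfDec
  have hchoice : ∀ α, ∃ Q : MvPolynomial (Fin (m+1) × Fin k) ℝ,
      α ∈ D → ∀ X, g α X = evalP X Q := by
    intro α
    by_cases hα : α ∈ D
    · have h2 : g α ∈ PolyF k (m+1) ⊓ InvF k (m+1) := hg α hα
      obtain ⟨P, hP⟩ := (Algebra.mem_inf.mp h2).1
      exact ⟨P, fun _ => hP⟩
    · exact ⟨0, fun h => absurd h hα⟩
  choose q hq using hchoice
  refine ⟨D, q, hbound, ?_, ?_⟩
  · intro α hα σ X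
    have h2 : g α ∈ PolyF k (m+1) ⊓ InvF k (m+1) := hg α hα
    have h2inv := (Algebra.mem_inf.mp h2).2
    rw [← hq α hα (permRow σ X), ← hq α hα X]
    exact h2inv σ X
  · intro X
    have hX := congrFun hfg X
    rw [hX]
    refine Finset.sum_congr rfl fun α hα => ?_
    rw [hq α hα X]
    rfl
end

section
/- A polynomial map P : ℝ^(n×k) → ℝ^(n×l) is permutation equivariant (P(σ·X) = σ·P(X) for all σ ∈ S_n) if and only if it can be written as P(X) = ∑_{|α|≤n} b_α(X) q_α(X)ᵀ, where b_α(X) = (x_1^α, ..., x_n^α)ᵀ ∈ ℝ^n and each q_α(X) ∈ ℝ^l has entries that are polynomials in the power-sum multi-symmetric polynomials s_β(X) = ∑_{i=1}^n x_i^β, |β| ≤ n. -/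
namespace EquivChar

open MvPolynomial Finset

noncomputable section

abbrev V (n k : ℕ) := (Fin n → Fin k → ℝ) → ℝ

/-- x^β -/
def pw {k : ℕ} (x : Fin k → ℝ) (β : Fin k → ℕ) : ℝ := ∏ m, x m ^ β m

/-- power sum s_β -/
def Sfun (n k : ℕ) (β : Fin k → ℕ) : V n k := fun X => ∑ r, pw (X r) β

/-- the algebra generated by the s_β, |β| ≤ n -/
def Asub (n k : ℕ) : Subalgebra ℝ (V n k) :=
  (MvPolynomial.aeval (fun β : {β : Fin k → ℕ // ∑ j, β j ≤ n} => Sfun n k β.1)).range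

lemma pw_add {k : ℕ} (x : Fin k → ℝ) (a b : Fin k → ℕ) :
    pw x (a + b) = pw x a * pw x b := by
  unfold pw
  rw [← Finset.prod_mul_distrib]
  exact Finset.prod_congr rfl fun m _ => by simp [pow_add]

lemma pw_zero {k : ℕ} (x : Fin k → ℝ) : pw x 0 = 1 := by simp [pw]

lemma aeval_apply {n k : ℕ} (p : MvPolynomial {β : Fin k → ℕ // ∑ j, β j ≤ n} ℝ)
    (X : Fin n → Fin k → ℝ) :
    (MvPolynomial.aeval (R := ℝ) (fun β : {β : Fin k → ℕ // ∑ j, β j ≤ n} => Sfun n k β.1) p) X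
      = MvPolynomial.eval (fun β : {β : Fin k → ℕ // ∑ j, β j ≤ n} => Sfun n k β.1 X) p := by
  have := MvPolynomial.comp_aeval (R := ℝ)
    (f := fun β : {β : Fin k → ℕ // ∑ j, β j ≤ n} => Sfun n k β.1)
    (φ := Pi.evalAlgHom ℝ (fun _ : (Fin n → Fin k → ℝ) => ℝ) X)
  have h2 := congrArg (fun (ψ : MvPolynomial _ ℝ →ₐ[ℝ] ℝ) => ψ p) this
  simp only [AlgHom.coe_comp, Function.comp_apply] at h2
  -- h2 : Pi.evalAlgHom _ _ X (aeval _ p) = aeval (fun β => Sfun n k β.1 X) p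
  have h3 : (MvPolynomial.aeval (R := ℝ)
      (fun β : {β : Fin k → ℕ // ∑ j, β j ≤ n} => Sfun n k β.1 X)) p
      = MvPolynomial.eval (fun β : {β : Fin k → ℕ // ∑ j, β j ≤ n} => Sfun n k β.1 X) p := by
    rw [← MvPolynomial.coe_aeval_eq_eval]; rfl
  exact h2.trans h3

lemma Sfun_mem {n k : ℕ} (β : Fin k → ℕ) (hβ : ∑ j, β j ≤ n) : Sfun n k β ∈ Asub n k :=
  ⟨MvPolynomial.X ⟨β, hβ⟩, by simp⟩

lemma Sfun_perm {n k : ℕ} (β : Fin k → ℕ) (σ : Equiv.Perm (Fin n)) (X : Fin n → Fin k → ℝ) :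
    Sfun n k β (fun i => X (σ⁻¹ i)) = Sfun n k β X := by
  unfold Sfun
  exact Equiv.sum_comp σ⁻¹ (fun r => pw (X r) β)

lemma Asub_perm {n k : ℕ} {a : V n k} (ha : a ∈ Asub n k) (σ : Equiv.Perm (Fin n))
    (X : Fin n → Fin k → ℝ) : a (fun i => X (σ⁻¹ i)) = a X := by
  obtain ⟨p, hp⟩ := ha
  have ha' : a = fun Y => MvPolynomial.eval
      (fun β : {β : Fin k → ℕ // ∑ j, β j ≤ n} => Sfun n k β.1 Y) p := by
    funext Y
    rw [← hp]
    exact aeval_apply p Y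
  rw [ha']
  exact congrArg (fun v => MvPolynomial.eval v p) (funext fun β => Sfun_perm β.1 σ X)

/-- all multi-indices of total degree ≤ n -/
def Dn (n k : ℕ) : Finset (Fin k → ℕ) :=
  Finset.image (fun g : Fin k → Fin (n+1) => fun j => (g j : ℕ))
    (Finset.univ.filter (fun g : Fin k → Fin (n+1) => ∑ j, (g j : ℕ) ≤ n))

lemma mem_Dn {n k : ℕ} (α : Fin k → ℕ) : α ∈ Dn n k ↔ ∑ j, α j ≤ n := by
  constructor
  · intro h
    obtain ⟨g, hg, rfl⟩ := Finset.mem_image.mp h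
    exact (Finset.mem_filter.mp hg).2
  · intro h
    have hj : ∀ j, α j < n + 1 := fun j => Nat.lt_succ_of_le (le_trans (Finset.single_le_sum
      (f := fun j => α j) (fun _ _ => Nat.zero_le _) (Finset.mem_univ j)) h)
    exact Finset.mem_image.mpr ⟨fun j => ⟨α j, hj j⟩,
      Finset.mem_filter.mpr ⟨Finset.mem_univ _, by simpa using h⟩, rfl⟩

/-- membership in the module generated by x_0^α, |α| ≤ n, over the algebra A -/
def InM (n k : ℕ) [NeZero n] (g : V n k) : Prop :=
  ∃ a : (Fin k → ℕ) → V n k, (∀ α, a α ∈ Asub n k) ∧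
    ∀ X, g X = ∑ α ∈ Dn n k, pw (X 0) α * a α X

section InM
variable {n k : ℕ} [NeZero n]

lemma InM_congr {g g' : V n k} (h : ∀ X, g X = g' X) (hg : InM n k g) : InM n k g' := by
  obtain ⟨a, ha, he⟩ := hg
  exact ⟨a, ha, fun X => (h X) ▸ he X⟩

lemma InM_zero : InM n k 0 :=
  ⟨fun _ => 0, fun _ => (Asub n k).zero_mem, fun X => by simp⟩

lemma InM_add {g g' : V n k} (hg : InM n k g) (hg' : InM n k g') :
    InM n k (fun X => g X + g' X) := by
  obtain ⟨a, ha, he⟩ := hg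
  obtain ⟨a', ha', he'⟩ := hg'
  refine ⟨fun α => a α + a' α, fun α => (Asub n k).add_mem (ha α) (ha' α), fun X => ?_⟩
  show g X + g' X = _
  rw [he X, he' X, ← Finset.sum_add_distrib]
  exact Finset.sum_congr rfl fun α _ => by simp [Pi.add_apply]; ring

lemma InM_smul (c : ℝ) {g : V n k} (hg : InM n k g) : InM n k (fun X => c * g X) := by
  obtain ⟨a, ha, he⟩ := hg
  refine ⟨fun α => c • a α, fun α => (Asub n k).smul_mem (ha α) c, fun X => ?_⟩
  show c * g X = _
  rw [he X, Finset.mul_sum]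
  exact Finset.sum_congr rfl fun α _ => by simp [Pi.smul_apply]; ring

lemma InM_mulA {a : V n k} (haA : a ∈ Asub n k) {g : V n k} (hg : InM n k g) :
    InM n k (fun X => g X * a X) := by
  obtain ⟨b, hb, he⟩ := hg
  refine ⟨fun α => b α * a, fun α => (Asub n k).mul_mem (hb α) haA, fun X => ?_⟩
  show g X * a X = _
  rw [he X, Finset.sum_mul]
  exact Finset.sum_congr rfl fun α _ => by simp [Pi.mul_apply]; ring

lemma InM_sum {ι : Type*} (s : Finset ι) (g : ι → V n k)
    (hg : ∀ i ∈ s, InM n k (g i)) : InM n k (fun X => ∑ i ∈ s, g i X) := by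
  classical
  induction s using Finset.induction_on with
  | empty => exact InM_congr (fun X => by simp) InM_zero
  | @insert i s' hnot ih =>
    have := InM_add (hg i (Finset.mem_insert_self i s'))
      (ih (fun j hj => hg j (Finset.mem_insert_of_mem hj)))
    exact InM_congr (fun X => by rw [Finset.sum_insert hnot]) this

lemma InM_b0 {α : Fin k → ℕ} (h : ∑ j, α j ≤ n) :
    InM n k (fun X => pw (X 0) α) := by
  classical
  refine ⟨fun α' => if α' = α then 1 else 0, fun α' => ?_, fun X => ?_⟩
  · show (if α' = α then (1 : V n k) else 0) ∈ Asub n k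
    split
    · exact (Asub n k).one_mem
    · exact (Asub n k).zero_mem
  · rw [Finset.sum_congr rfl (fun α' _ => ?_)]
    · rw [Finset.sum_ite_eq' (Dn n k) α (fun α' => pw (X 0) α')]
      simp [(mem_Dn α).mpr h]
    · show pw (X 0) α' * (if α' = α then (1 : V n k) else 0) X
        = if α' = α then pw (X 0) α' else 0
      split <;> simp

end InM

/-- sum over injective tuples of rows avoiding `E` -/
def Isum (n k : ℕ) (E : Finset (Fin n)) (q : ℕ) (c : Fin q → (Fin k → ℕ)) : V n k :=
  fun X => ∑ f ∈ Finset.univ.filter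
      (fun f : Fin q → Fin n => Function.Injective f ∧ ∀ t, f t ∉ E),
    ∏ t, pw (X (f t)) (c t)

lemma Isum_zero_slots (n k : ℕ) (E : Finset (Fin n)) (c : Fin 0 → (Fin k → ℕ)) :
    Isum n k E 0 c = fun _ => 1 := by
  classical
  funext X
  unfold Isum
  rw [Finset.filter_true_of_mem (fun f _ => ⟨fun a b _ => Subsingleton.elim a b,
    fun t => t.elim0⟩)]
  simp

lemma Isum_eq_zero (n k : ℕ) (E : Finset (Fin n)) (q : ℕ) (c : Fin q → (Fin k → ℕ))
    (h : n < q + E.card) : Isum n k E q c = fun _ => 0 := by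
  classical
  funext X
  unfold Isum
  rw [Finset.filter_eq_empty_iff.mpr, Finset.sum_empty]
  rintro f -
  rintro ⟨hinj, havoid⟩
  have h1 : (Finset.image f Finset.univ).card = q := by
    rw [Finset.card_image_of_injective _ hinj, Finset.card_univ, Fintype.card_fin]
  have h2 : Finset.image f Finset.univ ⊆ Finset.univ \ E := by
    intro x hx
    obtain ⟨t, -, rfl⟩ := Finset.mem_image.mp hx
    exact Finset.mem_sdiff.mpr ⟨Finset.mem_univ _, havoid t⟩
  have h3 : q ≤ n - E.card := by
    have := Finset.card_le_card h2
    rwa [h1, Finset.card_sdiff_of_subset (Finset.subset_univ E), Finset.card_univ,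
      Fintype.card_fin] at this
  have h4 : E.card ≤ n := by
    have := Finset.card_le_card (Finset.subset_univ E)
    rwa [Finset.card_univ, Fintype.card_fin] at this
  omega

lemma prod_update_pw {k q : ℕ} (y : Fin q → (Fin k → ℝ)) (c' : Fin q → (Fin k → ℕ))
    (t0 : Fin q) (δ : Fin k → ℕ) :
    ∏ t, pw (y t) (Function.update c' t0 (c' t0 + δ) t)
      = (∏ t, pw (y t) (c' t)) * pw (y t0) δ := by
  classical
  have h1 : (fun t => pw (y t) (Function.update c' t0 (c' t0 + δ) t))
      = Function.update (fun t => pw (y t) (c' t)) t0 (pw (y t0) (c' t0 + δ)) := by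
    funext t
    by_cases ht : t = t0
    · subst ht; simp
    · simp [Function.update_of_ne ht]
  rw [h1, Finset.prod_update_of_mem (Finset.mem_univ t0),
    Finset.prod_eq_mul_prod_sdiff_singleton_of_mem (Finset.mem_univ t0) (fun t => pw (y t) (c' t)),
    pw_add]
  ring

lemma snoc_injective {n q : ℕ} {g : Fin q → Fin n} {r : Fin n}
    (hg : Function.Injective g) (hr : ∀ t, g t ≠ r) :
    Function.Injective (Fin.snoc g r : Fin (q+1) → Fin n) := by
  intro a b hab
  induction a using Fin.lastCases with
  | last =>
    induction b using Fin.lastCases with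
    | last => rfl
    | cast b =>
      rw [Fin.snoc_last, Fin.snoc_castSucc] at hab
      exact absurd hab.symm (hr b)
  | cast a =>
    induction b using Fin.lastCases with
    | last =>
      rw [Fin.snoc_last, Fin.snoc_castSucc] at hab
      exact absurd hab (hr a)
    | cast b =>
      rw [Fin.snoc_castSucc, Fin.snoc_castSucc] at hab
      exact congrArg Fin.castSucc (hg hab)

lemma Isum_succ (n k : ℕ) (E : Finset (Fin n)) (q : ℕ) (c : Fin (q+1) → (Fin k → ℕ))
    (X : Fin n → Fin k → ℝ) :
    Isum n k E (q+1) c X =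
      Isum n k E q (c ∘ Fin.castSucc) X * Sfun n k (c (Fin.last q)) X
      - ∑ e ∈ E, pw (X e) (c (Fin.last q)) * Isum n k E q (c ∘ Fin.castSucc) X
      - ∑ t : Fin q, Isum n k E q
          (Function.update (c ∘ Fin.castSucc) t (c (Fin.castSucc t) + c (Fin.last q))) X := by
  classical
  set δ := c (Fin.last q) with hδ
  set c' : Fin q → (Fin k → ℕ) := c ∘ Fin.castSucc with hc'
  set Fq : Finset (Fin q → Fin n) := Finset.univ.filter
      (fun f : Fin q → Fin n => Function.Injective f ∧ ∀ t, f t ∉ E) with hFq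
  -- Step A : split the sum
  have key : Isum n k E (q+1) c X
      = ∑ g ∈ Fq, ∑ r ∈ Finset.univ \ (E ∪ Finset.image g Finset.univ),
          (∏ t : Fin q, pw (X (g t)) (c' t)) * pw (X r) δ := by
    unfold Isum
    rw [Finset.sum_sigma']
    refine Finset.sum_nbij' (fun f => ⟨f ∘ Fin.castSucc, f (Fin.last q)⟩)
      (fun p => Fin.snoc p.1 p.2) ?_ ?_ ?_ ?_ ?_
    · intro f hf
      rw [Finset.mem_filter] at hf
      obtain ⟨-, hinj, hE⟩ := hf
      refine Finset.mem_sigma.mpr ⟨?_, ?_⟩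
      · exact Finset.mem_filter.mpr ⟨Finset.mem_univ _,
          hinj.comp (Fin.castSucc_injective q), fun t => hE _⟩
      · rw [Finset.mem_sdiff, Finset.mem_union]
        push_neg
        refine ⟨Finset.mem_univ _, hE _, ?_⟩
        intro hmem
        obtain ⟨t, -, ht⟩ := Finset.mem_image.mp hmem
        exact absurd (hinj ht) (Fin.castSucc_lt_last t).ne
    · rintro ⟨g, r⟩ hp
      rw [Finset.mem_sigma] at hp
      obtain ⟨hg, hr⟩ := hp
      rw [hFq, Finset.mem_filter] at hg
      obtain ⟨-, hginj, hgE⟩ := hg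
      rw [Finset.mem_sdiff, Finset.mem_union] at hr
      push_neg at hr
      obtain ⟨-, hrE, hrim⟩ := hr
      have hrim' : ∀ t, g t ≠ r := fun t ht =>
        hrim (Finset.mem_image.mpr ⟨t, Finset.mem_univ t, ht⟩)
      refine Finset.mem_filter.mpr ⟨Finset.mem_univ _, snoc_injective hginj hrim', ?_⟩
      intro t
      show (Fin.snoc g r : Fin (q+1) → Fin n) t ∉ E
      induction t using Fin.lastCases with
      | last => simp only [Fin.snoc_last]; exact hrE
      | cast t => simp only [Fin.snoc_castSucc]; exact hgE t
    · intro f hf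
      show (Fin.snoc (f ∘ Fin.castSucc) (f (Fin.last q)) : Fin (q+1) → Fin n) = f
      funext t
      induction t using Fin.lastCases with
      | last => simp only [Fin.snoc_last]
      | cast t => simp only [Fin.snoc_castSucc]; rfl
    · rintro ⟨g, r⟩ hp
      show (⟨(Fin.snoc g r : Fin (q+1) → Fin n) ∘ Fin.castSucc,
        (Fin.snoc g r : Fin (q+1) → Fin n) (Fin.last q)⟩
          : Σ _ : Fin q → Fin n, Fin n) = ⟨g, r⟩
      have h1 : (Fin.snoc g r : Fin (q+1) → Fin n) ∘ Fin.castSucc = g := by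
        funext t
        simp only [Function.comp_apply, Fin.snoc_castSucc]
      have h2 : (Fin.snoc g r : Fin (q+1) → Fin n) (Fin.last q) = r := by
        simp only [Fin.snoc_last]
      rw [h1, h2]
    · intro f hf
      rw [Fin.prod_univ_castSucc]
      simp only [hc', Function.comp_apply, hδ]
  rw [key]
  -- Step B : evaluate the inner sum
  have inner : ∀ g ∈ Fq, ∑ r ∈ Finset.univ \ (E ∪ Finset.image g Finset.univ),
      (∏ t : Fin q, pw (X (g t)) (c' t)) * pw (X r) δ
      = (∏ t : Fin q, pw (X (g t)) (c' t)) *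
        (Sfun n k δ X - ∑ e ∈ E, pw (X e) δ - ∑ t : Fin q, pw (X (g t)) δ) := by
    intro g hg
    rw [hFq, Finset.mem_filter] at hg
    obtain ⟨-, hginj, hgE⟩ := hg
    rw [← Finset.mul_sum]
    congr 1
    rw [Finset.sum_sdiff_eq_sub (Finset.subset_univ _), Finset.sum_union, Finset.sum_image
      (fun x _ y _ h => hginj h)]
    · simp only [Sfun]; ring
    · rw [Finset.disjoint_left]
      intro e heE heim
      obtain ⟨t, -, ht⟩ := Finset.mem_image.mp heim
      exact hgE t (ht ▸ heE)
  rw [Finset.sum_congr rfl inner]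
  -- Step C : expand
  have expand : ∀ g ∈ Fq, (∏ t : Fin q, pw (X (g t)) (c' t)) *
      (Sfun n k δ X - ∑ e ∈ E, pw (X e) δ - ∑ t : Fin q, pw (X (g t)) δ)
      = (∏ t : Fin q, pw (X (g t)) (c' t)) * Sfun n k δ X
        - ∑ e ∈ E, pw (X e) δ * (∏ t : Fin q, pw (X (g t)) (c' t))
        - ∑ t0 : Fin q, ∏ t : Fin q, pw (X (g t))
            (Function.update c' t0 (c' t0 + δ) t) := by
    intro g hg
    rw [mul_sub, mul_sub, Finset.mul_sum, Finset.mul_sum]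
    congr 1
    · congr 1
      exact Finset.sum_congr rfl fun e _ => mul_comm _ _
    · exact Finset.sum_congr rfl fun t0 _ => (prod_update_pw (fun t => X (g t)) c' t0 δ).symm
  rw [Finset.sum_congr rfl expand]
  rw [Finset.sum_sub_distrib, Finset.sum_sub_distrib]
  congr 1
  · congr 1
    · rw [← Finset.sum_mul]; rfl
    · rw [Finset.sum_comm]
      exact Finset.sum_congr rfl fun e _ => by rw [← Finset.mul_sum]; rfl
  · rw [Finset.sum_comm]
    rfl

/-- total degree -/
def deg {k : ℕ} (β : Fin k → ℕ) : ℕ := ∑ j, β j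

lemma deg_add {k : ℕ} (a b : Fin k → ℕ) : deg (a + b) = deg a + deg b := by
  simp [deg, Finset.sum_add_distrib]

lemma deg_sum {k : ℕ} {ι : Type*} (s : Finset ι) (f : ι → (Fin k → ℕ)) :
    deg (∑ i ∈ s, f i) = ∑ i ∈ s, deg (f i) := by
  unfold deg
  simp only [Finset.sum_apply]
  exact Finset.sum_comm

/-- split a multi-index of large degree into unit pieces plus remainder -/
lemma exists_split {k : ℕ} : ∀ (m : ℕ) (γ : Fin k → ℕ), m ≤ ∑ j, γ j →
    ∃ (c : Fin m → (Fin k → ℕ)) (ρ : Fin k → ℕ),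
      (∀ t, deg (c t) = 1) ∧ γ = ρ + ∑ t, c t := by
  intro m
  induction m with
  | zero =>
    intro γ _
    exact ⟨Fin.elim0, γ, fun t => t.elim0, by simp⟩
  | succ m ih =>
    intro γ hγ
    classical
    have hsum : ∑ j, γ j ≠ 0 := by omega
    obtain ⟨j0, -, hj0⟩ := Finset.exists_ne_zero_of_sum_ne_zero hsum
    set δ : Fin k → ℕ := fun j => if j = j0 then 1 else 0 with hδ
    have hδsum : deg δ = 1 := by simp [deg, hδ]
    have hγδ : γ = (fun j => γ j - δ j) + δ := by
      funext j
      by_cases hj : j = j0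
      · subst hj; simp [hδ]; omega
      · simp [hδ, hj]
    have hsum' : ∑ j, ((fun j => γ j - δ j) j) + ∑ j, δ j = ∑ j, γ j := by
      rw [← Finset.sum_add_distrib]
      refine Finset.sum_congr rfl fun j _ => ?_
      by_cases hj : j = j0
      · subst hj; simp [hδ]; omega
      · simp [hδ, hj]
    have hδsum' : ∑ j, δ j = 1 := hδsum
    have hm : m ≤ ∑ j, ((fun j => γ j - δ j) j) := by omega
    obtain ⟨c, ρ, hc1, hceq⟩ := ih _ hm
    refine ⟨Fin.snoc c δ, ρ, ?_, ?_⟩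
    · intro t
      induction t using Fin.lastCases with
      | last => simpa only [Fin.snoc_last] using hδsum
      | cast t => simpa only [Fin.snoc_castSucc] using hc1 t
    · have hsnoc : ∑ t : Fin (m+1), (Fin.snoc c δ : Fin (m+1) → Fin k → ℕ) t
          = (∑ t : Fin m, c t) + δ := by
        rw [Fin.sum_univ_castSucc]
        simp only [Fin.snoc_castSucc, Fin.snoc_last]
      rw [hsnoc, ← add_assoc, ← hceq, ← hγδ]

/-- K1 : every power sum lies in the algebra generated by those of degree ≤ n -/
lemma Sfun_mem_all (n k : ℕ) (γ : Fin k → ℕ) : Sfun n k γ ∈ Asub n k := by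
  classical
  suffices H : ∀ (d : ℕ) (γ : Fin k → ℕ), deg γ = d → Sfun n k γ ∈ Asub n k from H _ γ rfl
  intro d
  induction d using Nat.strong_induction_on with
  | _ d IH =>
    intro γ hγd
    by_cases hdn : d ≤ n
    · exact Sfun_mem γ (by unfold deg at hγd; omega)
    push_neg at hdn
    -- the key inductive claim
    have key : ∀ (q : ℕ) (c : Fin (q+1) → (Fin k → ℕ)), (∀ t, 0 < deg (c t)) →
        (∑ t, deg (c t) ≤ d) →
        ∃ a ∈ Asub n k, ∀ X, Isum n k (∅ : Finset (Fin n)) (q+1) c X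
          = ((-1)^q * (q.factorial : ℝ)) * Sfun n k (∑ t, c t) X + a X := by
      intro q
      induction q with
      | zero =>
        intro c hc0 hcd
        refine ⟨0, (Asub n k).zero_mem, fun X => ?_⟩
        rw [Isum_succ, Isum_zero_slots]
        simp only [Finset.sum_empty, Finset.univ_eq_empty, Pi.zero_apply]
        have h1 : ∑ t : Fin 1, c t = c (Fin.last 0) := by
          rw [Fin.sum_univ_castSucc]
          simp
        rw [h1]
        simp
      | succ q ihq =>
        intro c hc0 hcd
        set δ := c (Fin.last (q+1)) with hδdef
        set c' : Fin (q+1) → (Fin k → ℕ) := c ∘ Fin.castSucc with hc'def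
        have hdegsplit : (∑ t, deg (c' t)) + deg δ = ∑ t, deg (c t) := by
          rw [Fin.sum_univ_castSucc (f := fun t => deg (c t))]
          rfl
        have hvecsplit : (∑ t, c' t) + δ = ∑ t, c t := by
          rw [Fin.sum_univ_castSucc (f := fun t => c t)]
          rfl
        have hδ0 : 0 < deg δ := hc0 _
        have hc'0 : ∀ t, 0 < deg (c' t) := fun t => hc0 _
        have hc'd : ∑ t, deg (c' t) ≤ d := by omega
        obtain ⟨a, haA, ha⟩ := ihq c' hc'0 hc'd
        -- the merged lists
        have merged : ∀ t0 : Fin (q+1), ∃ a ∈ Asub n k, ∀ X,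
            Isum n k (∅ : Finset (Fin n)) (q+1)
              (Function.update c' t0 (c' t0 + δ)) X
            = ((-1)^q * (q.factorial : ℝ)) * Sfun n k (∑ t, c t) X + a X := by
          intro t0
          have hdc : (fun t => deg (Function.update c' t0 (c' t0 + δ) t))
              = Function.update (fun t => deg (c' t)) t0 (deg (c' t0 + δ)) := by
            funext t
            by_cases ht : t = t0
            · subst ht; simp
            · simp [Function.update_of_ne ht]
          have hnz : ∀ t, 0 < deg (Function.update c' t0 (c' t0 + δ) t) := by
            intro t
            by_cases ht : t = t0
            · subst ht; rw [Function.update_self, deg_add]; omega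
            · rw [Function.update_of_ne ht]; exact hc'0 t
          have hsd : ∑ t, deg (Function.update c' t0 (c' t0 + δ) t) ≤ d := by
            rw [hdc, Finset.sum_update_of_mem (Finset.mem_univ t0), deg_add]
            have hsplit : ∑ t, deg (c' t)
                = (∑ t ∈ Finset.univ \ {t0}, deg (c' t)) + deg (c' t0) :=
              (Finset.sum_eq_sum_sdiff_singleton_add (Finset.mem_univ t0) _)
            omega
          have hvec : ∑ t, Function.update c' t0 (c' t0 + δ) t = ∑ t, c t := by
            have h1 : (fun t => Function.update c' t0 (c' t0 + δ) t)
                = Function.update c' t0 (c' t0 + δ) := rfl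
            rw [h1, Finset.sum_update_of_mem (Finset.mem_univ t0), ← hvecsplit]
            have hsplit : ∑ t, c' t
                = (∑ t ∈ Finset.univ \ {t0}, c' t) + c' t0 :=
              (Finset.sum_eq_sum_sdiff_singleton_add (Finset.mem_univ t0) _)
            rw [hsplit]
            abel
          obtain ⟨b, hbA, hb⟩ := ihq _ hnz hsd
          exact ⟨b, hbA, fun X => by rw [hb X, hvec]⟩
        choose aa haaA haa using merged
        -- degrees of the two power sums that appear are < d
        have hS' : Sfun n k (∑ t, c' t) ∈ Asub n k := by
          refine IH (deg (∑ t, c' t)) ?_ _ rfl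
          have := deg_sum (Finset.univ : Finset (Fin (q+1))) c'
          omega
        have hSδ : Sfun n k δ ∈ Asub n k := by
          refine IH (deg δ) ?_ _ rfl
          have h1 : 0 < ∑ t, deg (c' t) := by
            have := hc'0 0
            calc 0 < deg (c' 0) := this
            _ ≤ ∑ t, deg (c' t) := Finset.single_le_sum (f := fun t => deg (c' t))
                (fun _ _ => Nat.zero_le _) (Finset.mem_univ 0)
          omega
        refine ⟨(((-1)^q * (q.factorial : ℝ)) • (Sfun n k (∑ t, c' t) * Sfun n k δ)
          + a * Sfun n k δ) - ∑ t0, aa t0, ?_, ?_⟩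
        · refine (Asub n k).sub_mem ((Asub n k).add_mem ?_ ?_) ?_
          · exact (Asub n k).smul_mem ((Asub n k).mul_mem hS' hSδ) _
          · exact (Asub n k).mul_mem haA hSδ
          · exact Subalgebra.sum_mem _ (fun t0 _ => haaA t0)
        · intro X
          rw [Isum_succ]
          simp only [Finset.sum_empty, sub_zero]
          rw [ha X]
          have hupd : ∀ t0 : Fin (q+1),
              Isum n k (∅ : Finset (Fin n)) (q+1)
                (Function.update (c ∘ Fin.castSucc) t0
                  (c (Fin.castSucc t0) + c (Fin.last (q+1)))) X
              = ((-1)^q * (q.factorial : ℝ)) * Sfun n k (∑ t, c t) X + aa t0 X := by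
            intro t0
            have : Function.update (c ∘ Fin.castSucc) t0
                (c (Fin.castSucc t0) + c (Fin.last (q+1)))
                = Function.update c' t0 (c' t0 + δ) := rfl
            rw [this]
            exact haa t0 X
          rw [Finset.sum_congr rfl (fun t0 _ => hupd t0)]
          rw [Finset.sum_add_distrib, Finset.sum_const, Finset.card_univ,
            Fintype.card_fin]
          simp only [Pi.sub_apply, Pi.add_apply, Pi.smul_apply, Pi.mul_apply,
            smul_eq_mul, Finset.sum_apply]
          rw [← hvecsplit]
          have hfact : ((q+1).factorial : ℝ) = (q+1) * (q.factorial : ℝ) := by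
            rw [Nat.factorial_succ]
            push_cast
            ring
          rw [pow_succ, hfact]
          push_cast
          ring
    -- now apply with q = n and the splitting of γ
    obtain ⟨c, ρ, hc1, hceq⟩ := exists_split n γ (by unfold deg at hγd; omega)
    have hργ : deg ρ + n = d := by
      have h2 : deg γ = deg ρ + ∑ t, deg (c t) := by
        rw [hceq, deg_add, deg_sum]
      have h3 : ∑ t : Fin n, deg (c t) = n := by
        rw [Finset.sum_congr rfl (fun t _ => hc1 t)]
        simp
      omega
    set clist : Fin (n+1) → (Fin k → ℕ) := Fin.snoc c ρ with hclist
    have hcl0 : ∀ t, 0 < deg (clist t) := by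
      intro t
      induction t using Fin.lastCases with
      | last => simp only [hclist, Fin.snoc_last]; omega
      | cast t => simp only [hclist, Fin.snoc_castSucc, hc1 t]; omega
    have hcld : ∑ t, deg (clist t) ≤ d := by
      rw [Fin.sum_univ_castSucc]
      simp only [hclist, Fin.snoc_castSucc, Fin.snoc_last]
      rw [Finset.sum_congr rfl (fun t _ => show deg (c t) = 1 from hc1 t)]
      simp
      omega
    have hclvec : ∑ t, clist t = γ := by
      rw [Fin.sum_univ_castSucc]
      simp only [hclist, Fin.snoc_castSucc, Fin.snoc_last]
      rw [hceq]
      exact add_comm _ _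
    obtain ⟨a, haA, ha⟩ := key n clist hcl0 hcld
    have hzero : Isum n k (∅ : Finset (Fin n)) (n+1) clist = fun _ => 0 :=
      Isum_eq_zero n k ∅ (n+1) clist (by simp)
    have hK : ((-1 : ℝ)^n * (n.factorial : ℝ)) ≠ 0 := by
      apply mul_ne_zero
      · exact pow_ne_zero _ (by norm_num)
      · exact_mod_cast Nat.factorial_ne_zero n
    have hSeq : Sfun n k γ = (-((-1 : ℝ)^n * (n.factorial : ℝ))⁻¹) • a := by
      funext X
      have h0 : (0 : ℝ) = ((-1)^n * (n.factorial : ℝ)) * Sfun n k γ X + a X := by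
        rw [← hclvec, ← ha X, hzero]
      have := h0
      rw [Pi.smul_apply, smul_eq_mul]
      have hS : Sfun n k γ X = -(a X) / ((-1 : ℝ)^n * (n.factorial : ℝ)) := by
        rw [eq_div_iff hK]; linarith [h0]
      rw [hS]; ring
    rw [hSeq]
    exact (Asub n k).smul_mem haA _

section K2
variable {n k : ℕ} [NeZero n]

lemma InM_sub {g g' : V n k} (hg : InM n k g) (hg' : InM n k g') :
    InM n k (fun X => g X - g' X) := by
  have := InM_add hg (InM_smul (-1) hg')
  exact InM_congr (fun X => by ring_nf) this

/-- K2 : every monomial in the 0-th row lies in the module M -/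
lemma InM_b0_all (γ : Fin k → ℕ) : InM n k (fun X => pw (X 0) γ) := by
  classical
  suffices H : ∀ (d : ℕ) (γ : Fin k → ℕ), deg γ = d → InM n k (fun X => pw (X 0) γ)
    from H _ γ rfl
  intro d
  induction d using Nat.strong_induction_on with
  | _ d IH =>
    intro γ hγd
    by_cases hdn : d ≤ n
    · exact InM_b0 (by unfold deg at hγd; omega)
    push_neg at hdn
    have key : ∀ (q : ℕ) (c : Fin q → (Fin k → ℕ)) (γ0 : Fin k → ℕ),
        (∀ t, 0 < deg (c t)) → (deg γ0 + ∑ t, deg (c t) ≤ d) →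
        ∃ m, InM n k m ∧ ∀ X,
          pw (X 0) γ0 * Isum n k ({0} : Finset (Fin n)) q c X
            = ((-1)^q * (q.factorial : ℝ)) * pw (X 0) (γ0 + ∑ t, c t) + m X := by
      intro q
      induction q with
      | zero =>
        intro c γ0 hc0 hcd
        refine ⟨0, InM_zero, fun X => ?_⟩
        rw [Isum_zero_slots]
        simp
      | succ q ihq =>
        intro c γ0 hc0 hcd
        set δ := c (Fin.last q) with hδdef
        set c' : Fin q → (Fin k → ℕ) := c ∘ Fin.castSucc with hc'def
        have hdegsplit : (∑ t, deg (c' t)) + deg δ = ∑ t, deg (c t) := by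
          rw [Fin.sum_univ_castSucc (f := fun t => deg (c t))]
          rfl
        have hvecsplit : (∑ t, c' t) + δ = ∑ t, c t := by
          rw [Fin.sum_univ_castSucc (f := fun t => c t)]
          rfl
        have hδ0 : 0 < deg δ := hc0 _
        have hc'0 : ∀ t, 0 < deg (c' t) := fun t => hc0 _
        have hc'd : deg γ0 + ∑ t, deg (c' t) ≤ d := by omega
        obtain ⟨m1, hm1M, hm1⟩ := ihq c' γ0 hc'0 hc'd
        have hc'd2 : deg (γ0 + δ) + ∑ t, deg (c' t) ≤ d := by
          rw [deg_add]; omega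
        obtain ⟨m2, hm2M, hm2⟩ := ihq c' (γ0 + δ) hc'0 hc'd2
        -- merged lists
        have merged : ∀ t0 : Fin q, ∃ m, InM n k m ∧ ∀ X,
            pw (X 0) γ0 * Isum n k ({0} : Finset (Fin n)) q
              (Function.update c' t0 (c' t0 + δ)) X
            = ((-1)^q * (q.factorial : ℝ)) * pw (X 0) (γ0 + ∑ t, c t) + m X := by
          intro t0
          have hdc : (fun t => deg (Function.update c' t0 (c' t0 + δ) t))
              = Function.update (fun t => deg (c' t)) t0 (deg (c' t0 + δ)) := by
            funext t
            by_cases ht : t = t0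
            · subst ht; simp
            · simp [Function.update_of_ne ht]
          have hnz : ∀ t, 0 < deg (Function.update c' t0 (c' t0 + δ) t) := by
            intro t
            by_cases ht : t = t0
            · subst ht; rw [Function.update_self, deg_add]; omega
            · rw [Function.update_of_ne ht]; exact hc'0 t
          have hsd : deg γ0 + ∑ t, deg (Function.update c' t0 (c' t0 + δ) t) ≤ d := by
            rw [hdc, Finset.sum_update_of_mem (Finset.mem_univ t0), deg_add]
            have hsplit : ∑ t, deg (c' t)
                = (∑ t ∈ Finset.univ \ {t0}, deg (c' t)) + deg (c' t0) :=
              (Finset.sum_eq_sum_sdiff_singleton_add (Finset.mem_univ t0) _)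
            omega
          have hvec : ∑ t, Function.update c' t0 (c' t0 + δ) t = ∑ t, c t := by
            have h1 : (fun t => Function.update c' t0 (c' t0 + δ) t)
                = Function.update c' t0 (c' t0 + δ) := rfl
            rw [h1, Finset.sum_update_of_mem (Finset.mem_univ t0), ← hvecsplit]
            have hsplit : ∑ t, c' t
                = (∑ t ∈ Finset.univ \ {t0}, c' t) + c' t0 :=
              (Finset.sum_eq_sum_sdiff_singleton_add (Finset.mem_univ t0) _)
            rw [hsplit]
            abel
          obtain ⟨m3, hm3M, hm3⟩ := ihq _ γ0 hnz hsd
          exact ⟨m3, hm3M, fun X => by rw [hm3 X, hvec]⟩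
        choose mm hmmM hmm using merged
        -- the pw functions of smaller degree appearing
        have hpw1 : InM n k (fun X => pw (X 0) (γ0 + ∑ t, c' t)) := by
          refine IH (deg (γ0 + ∑ t, c' t)) ?_ _ rfl
          rw [deg_add, deg_sum]
          omega
        have hSδ : Sfun n k δ ∈ Asub n k := Sfun_mem_all n k δ
        -- define the new remainder
        refine ⟨fun X => (pw (X 0) γ0 * Isum n k ({0} : Finset (Fin n)) q c' X)
            * Sfun n k δ X - m2 X - ∑ t0, mm t0 X, ?_, ?_⟩
        · refine InM_sub (InM_sub ?_ hm2M) (InM_sum Finset.univ _ (fun t0 _ => hmmM t0))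
          refine InM_mulA hSδ ?_
          refine InM_congr (fun X => (hm1 X).symm) ?_
          exact InM_add (InM_smul _ hpw1) hm1M
        · intro X
          rw [Isum_succ]
          rw [Finset.sum_singleton]
          have hexp : pw (X 0) γ0 *
              (Isum n k ({0} : Finset (Fin n)) q (c ∘ Fin.castSucc) X
                  * Sfun n k (c (Fin.last q)) X
                - pw (X 0) (c (Fin.last q))
                  * Isum n k ({0} : Finset (Fin n)) q (c ∘ Fin.castSucc) X
                - ∑ t : Fin q, Isum n k ({0} : Finset (Fin n)) q
                    (Function.update (c ∘ Fin.castSucc) t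
                      (c (Fin.castSucc t) + c (Fin.last q))) X)
              = (pw (X 0) γ0 * Isum n k ({0} : Finset (Fin n)) q c' X)
                  * Sfun n k δ X
                - (pw (X 0) (γ0 + δ) * Isum n k ({0} : Finset (Fin n)) q c' X)
                - ∑ t0 : Fin q, pw (X 0) γ0 * Isum n k ({0} : Finset (Fin n)) q
                    (Function.update c' t0 (c' t0 + δ)) X := by
            rw [mul_sub, mul_sub, Finset.mul_sum]
            congr 1
            · congr 1
              · ring
              · rw [pw_add]
                ring
          rw [hexp, hm2 X, Finset.sum_congr rfl (fun t0 _ => hmm t0 X)]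
          rw [Finset.sum_add_distrib, Finset.sum_const, Finset.card_univ,
            Fintype.card_fin]
          have hv1 : γ0 + δ + ∑ t, c' t = γ0 + ∑ t, c t := by
            rw [← hvecsplit]; abel
          rw [hv1]
          have hfact : ((q+1).factorial : ℝ) = (q+1) * (q.factorial : ℝ) := by
            rw [Nat.factorial_succ]; push_cast; ring
          rw [pow_succ, hfact]
          ring
    -- apply with q = n
    obtain ⟨c, ρ, hc1, hceq⟩ := exists_split n γ (by unfold deg at hγd; omega)
    have hdegtot : deg ρ + ∑ t, deg (c t) ≤ d := by
      have h2 : deg γ = deg ρ + ∑ t, deg (c t) := by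
        rw [hceq, deg_add, deg_sum]
      omega
    obtain ⟨m, hmM, hm⟩ := key n c ρ (fun t => by rw [hc1 t]; omega) hdegtot
    have hzero : Isum n k ({0} : Finset (Fin n)) n c = fun _ => 0 :=
      Isum_eq_zero n k _ n c (by simp)
    have hK : ((-1 : ℝ)^n * (n.factorial : ℝ)) ≠ 0 := by
      apply mul_ne_zero
      · exact pow_ne_zero _ (by norm_num)
      · exact_mod_cast Nat.factorial_ne_zero n
    have hv : ρ + ∑ t, c t = γ := hceq.symm
    have heq : ∀ X, pw (X 0) γ = (-((-1 : ℝ)^n * (n.factorial : ℝ))⁻¹) * m X := by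
      intro X
      have h0 := hm X
      rw [hzero, hv] at h0
      simp only [mul_zero] at h0
      field_simp
      linarith [h0]
    exact InM_congr (fun X => (heq X).symm) (InM_smul _ hmM)

/-- K3 : pointed injection sums lie in the module, for arbitrary exponent lists -/
lemma InM_pointed : ∀ (q : ℕ) (c : Fin q → (Fin k → ℕ)) (γ0 : Fin k → ℕ),
    InM n k (fun X => pw (X 0) γ0 * Isum n k ({0} : Finset (Fin n)) q c X) := by
  intro q
  induction q with
  | zero =>
    intro c γ0
    refine InM_congr (fun X => ?_) (InM_b0_all γ0)
    rw [Isum_zero_slots, mul_one]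
  | succ q ihq =>
    intro c γ0
    set δ := c (Fin.last q) with hδdef
    set c' : Fin q → (Fin k → ℕ) := c ∘ Fin.castSucc with hc'def
    have h1 : InM n k (fun X =>
        (pw (X 0) γ0 * Isum n k ({0} : Finset (Fin n)) q c' X) * Sfun n k δ X) :=
      InM_mulA (Sfun_mem_all n k δ) (ihq c' γ0)
    have h2 : InM n k (fun X =>
        pw (X 0) (γ0 + δ) * Isum n k ({0} : Finset (Fin n)) q c' X) := ihq c' (γ0 + δ)
    have h3 : InM n k (fun X => ∑ t0 : Fin q,
        pw (X 0) γ0 * Isum n k ({0} : Finset (Fin n)) q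
          (Function.update c' t0 (c' t0 + δ)) X) :=
      InM_sum Finset.univ _ (fun t0 _ => ihq _ γ0)
    refine InM_congr (fun X => ?_) (InM_sub (InM_sub h1 h2) h3)
    rw [Isum_succ, Finset.sum_singleton]
    rw [mul_sub, mul_sub, Finset.mul_sum]
    congr 1
    congr 1
    · ring
    · rw [pw_add]
      ring

end K2

section Sym
variable {m k : ℕ}

/-- the stabilizer of row 0 as a finset of permutations -/
def Stab (m : ℕ) : Finset (Equiv.Perm (Fin (m+1))) :=
  Finset.univ.filter (fun σ => σ 0 = 0)

/-- extend an injection `Fin m → Fin (m+1)` avoiding `0` to a permutation sending `0` to `0` -/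
noncomputable def extPerm {m : ℕ} (f : Fin m → Fin (m+1)) : Equiv.Perm (Fin (m+1)) :=
  if h : Function.Bijective (Fin.cons 0 f : Fin (m+1) → Fin (m+1)) then
    Equiv.ofBijective _ h else 1

lemma cons_bijective {m : ℕ} (f : Fin m → Fin (m+1)) (hinj : Function.Injective f)
    (h0 : ∀ t, f t ≠ 0) :
    Function.Bijective (Fin.cons 0 f : Fin (m+1) → Fin (m+1)) := by
  rw [← Finite.injective_iff_bijective]
  intro a b hab
  induction a using Fin.cases with
  | zero =>
    induction b using Fin.cases with
    | zero => rfl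
    | succ b =>
      rw [Fin.cons_zero, Fin.cons_succ] at hab
      exact absurd hab.symm (h0 b)
  | succ a =>
    induction b using Fin.cases with
    | zero =>
      rw [Fin.cons_zero, Fin.cons_succ] at hab
      exact absurd hab (h0 a)
    | succ b =>
      rw [Fin.cons_succ, Fin.cons_succ] at hab
      exact congrArg Fin.succ (hinj hab)

lemma extPerm_coe {m : ℕ} (f : Fin m → Fin (m+1))
    (h : Function.Bijective (Fin.cons 0 f : Fin (m+1) → Fin (m+1))) :
    ⇑(extPerm f) = Fin.cons 0 f := by
  rw [extPerm, dif_pos h]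
  rfl

lemma extPerm_eq {m : ℕ} (f : Fin m → Fin (m+1)) (e : Equiv.Perm (Fin (m+1)))
    (h : Fin.cons 0 f = ⇑e) : extPerm f = e := by
  have hbij : Function.Bijective (Fin.cons 0 f : Fin (m+1) → Fin (m+1)) := by
    rw [h]; exact e.bijective
  refine Equiv.coe_fn_injective ?_
  show ⇑(extPerm f) = ⇑e
  rw [extPerm_coe f hbij, h]

lemma sym_sum_eq (γ : Fin (m+1) → (Fin k → ℕ)) (X : Fin (m+1) → Fin k → ℝ) :
    ∑ σ ∈ Stab m, ∏ i, pw (X (σ⁻¹ i)) (γ i)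
      = pw (X 0) (γ 0) * Isum (m+1) k ({0} : Finset (Fin (m+1))) m (γ ∘ Fin.succ) X := by
  classical
  unfold Isum
  rw [Finset.mul_sum]
  refine Finset.sum_nbij' (fun σ => (⇑σ⁻¹ ∘ Fin.succ : Fin m → Fin (m+1)))
    (fun f => (extPerm f)⁻¹) ?_ ?_ ?_ ?_ ?_
  · intro σ hσ
    rw [Stab, Finset.mem_filter] at hσ
    have hσ0 : σ⁻¹ 0 = 0 := by
      rw [Equiv.Perm.inv_def, Equiv.symm_apply_eq]
      exact hσ.2.symm
    refine Finset.mem_filter.mpr ⟨Finset.mem_univ _, ?_, ?_⟩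
    · exact (σ⁻¹.injective).comp (Fin.succ_injective m)
    · intro t ht
      rw [Finset.mem_singleton] at ht
      have h1 : (σ⁻¹ (Fin.succ t) : Fin (m+1)) = σ⁻¹ 0 := by
        rw [hσ0]; exact ht
      have h2 := σ⁻¹.injective h1
      exact (Fin.succ_ne_zero t) h2
  · intro f hf
    rw [Finset.mem_filter] at hf
    obtain ⟨-, hinj, h0⟩ := hf
    have h0' : ∀ t, f t ≠ 0 := fun t ht => h0 t (Finset.mem_singleton.mpr ht)
    have hbij := cons_bijective f hinj h0'
    refine Finset.mem_filter.mpr ⟨Finset.mem_univ _, ?_⟩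
    show (extPerm f)⁻¹ 0 = 0
    have : extPerm f 0 = 0 := by
      rw [show (extPerm f 0 : Fin (m+1)) = (⇑(extPerm f)) 0 from rfl, extPerm_coe f hbij]
      exact Fin.cons_zero _ _
    rw [Equiv.Perm.inv_def, Equiv.symm_apply_eq]
    exact this.symm
  · intro σ hσ
    rw [Stab, Finset.mem_filter] at hσ
    have hσ0 : σ⁻¹ 0 = 0 := by
      rw [Equiv.Perm.inv_def, Equiv.symm_apply_eq]
      exact hσ.2.symm
    have hcons : Fin.cons 0 (⇑σ⁻¹ ∘ Fin.succ : Fin m → Fin (m+1)) = ⇑σ⁻¹ := by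
      funext i
      induction i using Fin.cases with
      | zero => rw [Fin.cons_zero, hσ0]
      | succ t => rw [Fin.cons_succ]; rfl
    show (extPerm (⇑σ⁻¹ ∘ Fin.succ : Fin m → Fin (m+1)))⁻¹ = σ
    rw [extPerm_eq _ σ⁻¹ hcons, inv_inv]
  · intro f hf
    rw [Finset.mem_filter] at hf
    obtain ⟨-, hinj, h0⟩ := hf
    have h0' : ∀ t, f t ≠ 0 := fun t ht => h0 t (Finset.mem_singleton.mpr ht)
    have hbij := cons_bijective f hinj h0'
    funext t
    show ((extPerm f)⁻¹)⁻¹ (Fin.succ t) = f t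
    rw [inv_inv, show ((extPerm f) (Fin.succ t) : Fin (m+1)) = (⇑(extPerm f)) (Fin.succ t)
      from rfl, extPerm_coe f hbij, Fin.cons_succ]
  · intro σ hσ
    rw [Stab, Finset.mem_filter] at hσ
    have hσ0 : σ⁻¹ 0 = 0 := by
      rw [Equiv.Perm.inv_def, Equiv.symm_apply_eq]
      exact hσ.2.symm
    rw [Fin.prod_univ_succ (f := fun i => pw (X (σ⁻¹ i)) (γ i)), hσ0]
    rfl

lemma sym_InM (γ : Fin (m+1) → (Fin k → ℕ)) :
    InM (m+1) k (fun X => ∑ σ ∈ Stab m, ∏ i, pw (X (σ⁻¹ i)) (γ i)) :=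
  InM_congr (fun X => (sym_sum_eq γ X).symm) (InM_pointed m (γ ∘ Fin.succ) (γ 0))

end Sym

section Main

lemma Asub_poly {n k : ℕ} {a : V n k} (ha : a ∈ Asub n k) :
    ∃ p : MvPolynomial {β : Fin k → ℕ // ∑ j, β j ≤ n} ℝ,
      ∀ X, a X = MvPolynomial.eval
        (fun β : {β : Fin k → ℕ // ∑ j, β j ≤ n} => Sfun n k β.1 X) p := by
  obtain ⟨p, hp⟩ := ha
  exact ⟨p, fun X => by rw [← hp]; exact aeval_apply p X⟩

lemma one_mem_Stab (m : ℕ) : (1 : Equiv.Perm (Fin (m+1))) ∈ Stab m :=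
  Finset.mem_filter.mpr ⟨Finset.mem_univ _, rfl⟩

lemma forward (m k l : ℕ) (P : Fin (m+1) → Fin l → MvPolynomial (Fin (m+1) × Fin k) ℝ)
    (hP : ∀ (σ : Equiv.Perm (Fin (m+1))) (X : Fin (m+1) → Fin k → ℝ)
      (i : Fin (m+1)) (j : Fin l),
        evalP (permRow σ X) (P i j) = evalP X (P (σ⁻¹ i) j)) :
    ∃ (D : Finset (Fin k → ℕ))
      (q : (Fin k → ℕ) → Fin l → MvPolynomial {β : Fin k → ℕ // ∑ j, β j ≤ m+1} ℝ),
      (∀ α ∈ D, ∑ j, α j ≤ m+1) ∧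
      ∀ (X : Fin (m+1) → Fin k → ℝ) (i : Fin (m+1)) (j : Fin l),
        evalP X (P i j) =
          ∑ α ∈ D, (∏ mm, X i mm ^ α mm) *
            MvPolynomial.eval
              (fun β : {β : Fin k → ℕ // ∑ j, β j ≤ m+1} =>
                ∑ r, ∏ mm, X r mm ^ β.1 mm) (q α j) := by
  classical
  have hG : ∀ j : Fin l, InM (m+1) k (fun X => evalP X (P 0 j)) := by
    intro j
    have hev : ∀ (σ : Equiv.Perm (Fin (m+1))) (X : Fin (m+1) → Fin k → ℝ),
        evalP (permRow σ X) (P 0 j)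
          = ∑ E ∈ (P 0 j).support, MvPolynomial.coeff E (P 0 j)
              * ∏ i, pw (X (σ⁻¹ i)) (fun m' => E (i, m')) := by
      intro σ X
      rw [evalP, MvPolynomial.eval_eq']
      refine Finset.sum_congr rfl fun E _ => ?_
      congr 1
      rw [Fintype.prod_prod_type (f := fun v : Fin (m+1) × Fin k =>
        (permRow σ X) v.1 v.2 ^ E v)]
      rfl
    have hswap : ∀ X, ∑ σ ∈ Stab m, evalP (permRow σ X) (P 0 j)
        = ∑ E ∈ (P 0 j).support, MvPolynomial.coeff E (P 0 j)
            * ∑ σ ∈ Stab m, ∏ i, pw (X (σ⁻¹ i)) (fun m' => E (i, m')) := by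
      intro X
      rw [Finset.sum_congr rfl (fun σ _ => hev σ X), Finset.sum_comm]
      exact Finset.sum_congr rfl fun E _ => by rw [Finset.mul_sum]
    have hexpand : InM (m+1) k (fun X => ∑ σ ∈ Stab m, evalP (permRow σ X) (P 0 j)) := by
      refine InM_congr (fun X => (hswap X).symm) ?_
      exact InM_sum _ _ fun E _ =>
        InM_smul _ (sym_InM (fun i => (fun m' => E (i, m'))))
    have hinv : ∀ σ ∈ Stab m, ∀ X, evalP (permRow σ X) (P 0 j) = evalP X (P 0 j) := by
      intro σ hσ X
      rw [hP σ X 0 j]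
      have hσ0 : σ⁻¹ 0 = 0 := by
        rw [Equiv.Perm.inv_def, Equiv.symm_apply_eq]
        exact ((Finset.mem_filter.mp hσ).2).symm
      rw [hσ0]
    have hcard : ((Stab m).card : ℝ) ≠ 0 := by
      have : 0 < (Stab m).card := Finset.card_pos.mpr ⟨1, one_mem_Stab m⟩
      positivity
    refine InM_congr (fun X => ?_) (InM_smul (((Stab m).card : ℝ))⁻¹ hexpand)
    rw [Finset.sum_congr rfl (fun σ hσ => hinv σ hσ X), Finset.sum_const, nsmul_eq_mul]
    field_simp
  choose a haA harep using hG
  choose p hp using fun j α => Asub_poly (haA j α)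
  refine ⟨Dn (m+1) k, fun α j => p j α, fun α hα => (mem_Dn α).mp hα, ?_⟩
  intro X i j
  set σ := Equiv.swap (0 : Fin (m+1)) i with hσdef
  have hσinv : σ⁻¹ 0 = i := by
    rw [hσdef, Equiv.swap_inv]
    exact Equiv.swap_apply_left 0 i
  have h1 := hP σ X 0 j
  rw [hσinv] at h1
  have h4 : evalP (permRow σ X) (P 0 j)
      = ∑ α ∈ Dn (m+1) k, pw ((permRow σ X) 0) α * a j α (permRow σ X) :=
    harep j (permRow σ X)
  rw [← h1, h4]
  refine Finset.sum_congr rfl fun α hα => ?_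
  have h2 : (permRow σ X) 0 = X i := by
    show X (σ⁻¹ 0) = X i
    rw [hσinv]
  have h3 : a j α (permRow σ X) = a j α X := Asub_perm (haA j α) σ X
  rw [h2, h3, hp j α X]
  rfl

end Main

end

end EquivChar

/-- Characterization of permutation-equivariant polynomial maps
`P : ℝ^{n×k} → ℝ^{n×l}`: `P` is equivariant iff `P(X) = ∑_{|α|≤n} b_α(X) q_α(X)ᵀ`,
where `b_α(X) = (x_1^α, …, x_n^α)ᵀ` and each entry of `q_α(X)` is a polynomial in
the power-sum multi-symmetric polynomials `s_β(X) = ∑_i x_i^β`, `|β| ≤ n`. -/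
theorem equivariant_poly_characterization (n k l : ℕ)
    (P : Fin n → Fin l → MvPolynomial (Fin n × Fin k) ℝ) :
    (∀ (σ : Equiv.Perm (Fin n)) (X : Fin n → Fin k → ℝ) (i : Fin n) (j : Fin l),
        evalP (permRow σ X) (P i j) = evalP X (P (σ⁻¹ i) j))
    ↔ ∃ (D : Finset (Fin k → ℕ))
        (q : (Fin k → ℕ) → Fin l → MvPolynomial {β : Fin k → ℕ // ∑ j, β j ≤ n} ℝ),
        (∀ α ∈ D, ∑ j, α j ≤ n) ∧
        ∀ (X : Fin n → Fin k → ℝ) (i : Fin n) (j : Fin l),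
          evalP X (P i j) =
            ∑ α ∈ D, (∏ m, X i m ^ α m) *
              MvPolynomial.eval
                (fun β : {β : Fin k → ℕ // ∑ j, β j ≤ n} => ∑ r, ∏ m, X r m ^ β.1 m) (q α j) := by
  constructor
  · intro hP
    cases n with
    | zero =>
      exact ⟨∅, fun _ _ => 0, by simp, fun X i j => i.elim0⟩
    | succ m =>
      exact EquivChar.forward m k l P hP
  · rintro ⟨D, q, hD, hrep⟩ σ X i j
    rw [hrep (permRow σ X) i j, hrep X (σ⁻¹ i) j]
    refine Finset.sum_congr rfl fun α hα => ?_
    congr 1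
    have hassign : (fun β : {β : Fin k → ℕ // ∑ j, β j ≤ n} =>
        ∑ r, ∏ m, permRow σ X r m ^ β.1 m)
        = (fun β : {β : Fin k → ℕ // ∑ j, β j ≤ n} => ∑ r, ∏ m, X r m ^ β.1 m) :=
      funext fun β => Equiv.sum_comp σ⁻¹ (fun r => ∏ m, X r m ^ β.1 m)
    rw [hassign]
end

section
/- Permutation-equivariant polynomial maps P : ℝ^(n×k_in) → ℝ^(n×k_out) are dense, in the uniform (sup) norm over the cube K = [0,1]^(n×k_in), in the space of continuous permutation-equivariant functions F : ℝ^(n×k_in) → ℝ^(n×k_out) restricted to K. -/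
/-- Renaming of variables induced by a row permutation. -/
noncomputable def renP {n k : ℕ} (σ : Equiv.Perm (Fin n)) :
    MvPolynomial (Fin n × Fin k) ℝ →ₐ[ℝ] MvPolynomial (Fin n × Fin k) ℝ :=
  MvPolynomial.rename (Prod.map σ id)

lemma evalP_renP {n k : ℕ} (σ : Equiv.Perm (Fin n)) (X : Fin n → Fin k → ℝ)
    (p : MvPolynomial (Fin n × Fin k) ℝ) :
    evalP X (renP σ p) = evalP (permRow σ⁻¹ X) p := by
  simp only [evalP, renP, MvPolynomial.eval_rename]
  rfl

lemma renP_renP {n k : ℕ} (σ τ : Equiv.Perm (Fin n))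
    (p : MvPolynomial (Fin n × Fin k) ℝ) :
    renP σ (renP τ p) = renP (σ * τ) p := by
  simp only [renP, MvPolynomial.rename_rename]
  rfl

/-- Group-averaged (symmetrized) polynomial map. -/
noncomputable def avgP {n kin kout : ℕ} (Q : Fin n → Fin kout → MvPolynomial (Fin n × Fin kin) ℝ)
    (i : Fin n) (j : Fin kout) : MvPolynomial (Fin n × Fin kin) ℝ :=
  MvPolynomial.C ((n.factorial : ℝ))⁻¹ * ∑ τ : Equiv.Perm (Fin n), renP τ (Q (τ⁻¹ i) j)

lemma evalP_avgP {n kin kout : ℕ} (Q : Fin n → Fin kout → MvPolynomial (Fin n × Fin kin) ℝ)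
    (X : Fin n → Fin kin → ℝ) (i : Fin n) (j : Fin kout) :
    evalP X (avgP Q i j) = ((n.factorial : ℝ))⁻¹ * ∑ τ : Equiv.Perm (Fin n),
      evalP (permRow τ⁻¹ X) (Q (τ⁻¹ i) j) := by
  unfold avgP evalP
  rw [map_mul, MvPolynomial.eval_C, map_sum]
  congr 1
  refine Finset.sum_congr rfl fun τ _ => ?_
  have := evalP_renP (k := kin) τ X (Q (τ⁻¹ i) j)
  simpa [evalP] using this

lemma permRow_permRow {n k : ℕ} (σ τ : Equiv.Perm (Fin n)) (X : Fin n → Fin k → ℝ) :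
    permRow σ (permRow τ X) = permRow (σ * τ) X := by
  funext i
  simp [permRow]

/-- Permutation-equivariant polynomial maps are dense (in sup norm over the cube
`[0,1]^{n×k_in}`) in the space of continuous permutation-equivariant functions. -/
theorem equivariant_polys_dense (n kin kout : ℕ)
    (F : (Fin n → Fin kin → ℝ) → Fin n → Fin kout → ℝ)
    (hcont : Continuous F)
    (hequiv : ∀ (σ : Equiv.Perm (Fin n)) (X : Fin n → Fin kin → ℝ) (i : Fin n),
      F (permRow σ X) i = F X (σ⁻¹ i))
    (ε : ℝ) (hε : 0 < ε) :
    ∃ P : Fin n → Fin kout → MvPolynomial (Fin n × Fin kin) ℝ,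
      (∀ (σ : Equiv.Perm (Fin n)) (X : Fin n → Fin kin → ℝ) (i : Fin n) (j : Fin kout),
        evalP (permRow σ X) (P i j) = evalP X (P (σ⁻¹ i) j)) ∧
      ∀ X : Fin n → Fin kin → ℝ, (∀ i j, X i j ∈ Set.Icc (0 : ℝ) 1) →
        ∀ i j, |F X i j - evalP X (P i j)| < ε := by
  classical
  -- the cube as a subtype
  set s : Set (Fin n → Fin kin → ℝ) := Set.Icc 0 1 with hs
  haveI : CompactSpace s := isCompact_iff_compactSpace.mp isCompact_Icc
  -- the algebra of polynomial functions on the cube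
  let φ : MvPolynomial (Fin n × Fin kin) ℝ →ₐ[ℝ] C(s, ℝ) :=
    MvPolynomial.aeval (fun v : Fin n × Fin kin =>
      ContinuousMap.mk (fun x : s => (x : Fin n → Fin kin → ℝ) v.1 v.2)
        (by exact (continuous_apply v.2).comp ((continuous_apply v.1).comp continuous_subtype_val)))
  have hφ : ∀ (p : MvPolynomial (Fin n × Fin kin) ℝ) (x : s),
      φ p x = evalP (x : Fin n → Fin kin → ℝ) p := by
    intro p x
    have : (ContinuousMap.evalAlgHom ℝ ℝ x).comp φ
        = MvPolynomial.aeval (fun v : Fin n × Fin kin =>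
            (x : Fin n → Fin kin → ℝ) v.1 v.2) := by
      apply MvPolynomial.algHom_ext
      intro v
      simp [φ]
    have := congrArg (fun f => f p) this
    simpa [evalP, MvPolynomial.aeval_def] using this
  have hsep : (φ.range : Subalgebra ℝ C(s, ℝ)).SeparatesPoints := by
    intro x y hxy
    have : ∃ v : Fin n × Fin kin,
        (x : Fin n → Fin kin → ℝ) v.1 v.2 ≠ (y : Fin n → Fin kin → ℝ) v.1 v.2 := by
      by_contra h
      push_neg at h
      apply hxy
      apply Subtype.ext
      funext i j
      exact h (i, j)
    obtain ⟨v, hv⟩ := this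
    refine ⟨_, ⟨φ (MvPolynomial.X v), ⟨MvPolynomial.X v, rfl⟩, rfl⟩, ?_⟩
    simpa [hφ, evalP] using hv
  -- Stone–Weierstrass approximation for each output coordinate
  have hQ : ∀ (i : Fin n) (j : Fin kout), ∃ q : MvPolynomial (Fin n × Fin kin) ℝ,
      ∀ x : s, |F (x : Fin n → Fin kin → ℝ) i j - evalP (x : Fin n → Fin kin → ℝ) q| < ε := by
    intro i j
    obtain ⟨g, hg⟩ := ContinuousMap.exists_mem_subalgebra_near_continuous_of_separatesPoints
      φ.range hsep (fun x : s => F (x : Fin n → Fin kin → ℝ) i j)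
      (by fun_prop) ε hε
    obtain ⟨q, hq⟩ := g.2
    refine ⟨q, fun x => ?_⟩
    have h2 : (↑g : C(s, ℝ)) = φ q := hq.symm
    have h3 : ‖(φ q) x - F (x : Fin n → Fin kin → ℝ) i j‖ < ε := by
      have := hg x; rwa [h2] at this
    rw [hφ] at h3
    rwa [Real.norm_eq_abs, abs_sub_comm] at h3
  choose Q hQ using hQ
  -- averaged (symmetrized) polynomials
  set c : ℝ := ((n.factorial : ℝ))⁻¹ with hcdef
  have hcard : (Finset.univ : Finset (Equiv.Perm (Fin n))).card = n.factorial := by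
    simp [Fintype.card_perm]
  have hfac : (0 : ℝ) < (n.factorial : ℝ) := by
    exact_mod_cast Nat.factorial_pos n
  have hevalP : ∀ (X : Fin n → Fin kin → ℝ) (i : Fin n) (j : Fin kout),
      evalP X (avgP Q i j) = c * ∑ τ : Equiv.Perm (Fin n),
        evalP (permRow τ⁻¹ X) (Q (τ⁻¹ i) j) := fun X i j => evalP_avgP Q X i j
  refine ⟨avgP Q, ?_, ?_⟩
  · -- equivariance
    intro σ X i j
    rw [hevalP, hevalP]
    congr 1
    refine Fintype.sum_equiv (Equiv.mulLeft σ⁻¹) _ _ fun τ => ?_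
    have h1 : permRow ((σ⁻¹ * τ)⁻¹) X = permRow τ⁻¹ (permRow σ X) := by
      rw [permRow_permRow]
      congr 1
    have h2 : (σ⁻¹ * τ)⁻¹ (σ⁻¹ i) = τ⁻¹ i := by
      simp [mul_inv_rev, Equiv.Perm.mul_apply]
    simp only [Equiv.coe_mulLeft, h1, h2]
  · -- approximation
    intro X hX i j
    have hXs : ∀ τ : Equiv.Perm (Fin n), permRow τ⁻¹ X ∈ s := by
      intro τ
      constructor
      · intro i'; intro j'; exact (hX _ j').1
      · intro i'; intro j'; exact (hX _ j').2
    have hFavg : F X i j = c * ∑ τ : Equiv.Perm (Fin n),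
        F (permRow τ⁻¹ X) (τ⁻¹ i) j := by
      have : ∀ τ : Equiv.Perm (Fin n), F (permRow τ⁻¹ X) (τ⁻¹ i) j = F X i j := by
        intro τ
        have h1 := hequiv τ (permRow τ⁻¹ X) i
        have h2 : permRow τ (permRow τ⁻¹ X) = X := by
          rw [permRow_permRow, mul_inv_cancel]
          funext i'
          simp [permRow]
        rw [h2] at h1
        exact (congrFun h1 j).symm
      rw [Finset.sum_congr rfl (fun τ _ => this τ), Finset.sum_const, hcard,
        nsmul_eq_mul, hcdef]
      field_simp
    rw [hFavg, hevalP, ← mul_sub, ← Finset.sum_sub_distrib, abs_mul]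
    have hc : |c| = c := abs_of_pos (by positivity)
    rw [hc]
    calc c * |∑ τ : Equiv.Perm (Fin n),
          (F (permRow τ⁻¹ X) (τ⁻¹ i) j - evalP (permRow τ⁻¹ X) (Q (τ⁻¹ i) j))|
        ≤ c * ∑ τ : Equiv.Perm (Fin n),
          |F (permRow τ⁻¹ X) (τ⁻¹ i) j - evalP (permRow τ⁻¹ X) (Q (τ⁻¹ i) j)| := by
          apply mul_le_mul_of_nonneg_left (Finset.abs_sum_le_sum_abs _ _) (by positivity)
      _ < c * ∑ _τ : Equiv.Perm (Fin n), ε := by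
          apply mul_lt_mul_of_pos_left _ (by positivity)
          apply Finset.sum_lt_sum_of_nonempty Finset.univ_nonempty
          intro τ _
          exact hQ (τ⁻¹ i) j ⟨permRow τ⁻¹ X, hXs τ⟩
      _ = ε := by
          rw [Finset.sum_const, hcard, nsmul_eq_mul, hcdef]
          field_simp
end

section
/- For X, Y ∈ ℝ^(n×k): there exists σ ∈ S_n with Y = σ·X (i.e., the rows of Y are a permutation of the rows of X) if and only if s_α(X) = s_α(Y) for all multi-indices α ∈ ℕ^k with |α| ≤ n, where s_α(X) = ∑_{i=1}^n x_i^α are the power-sum multi-symmetric polynomials. -/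
open Finset MvPolynomial

/-- Cancel `Multiset.map` along a function injective on the elements involved. -/
lemma multiset_map_eq_of_injOn {α β : Type*} {f : α → β} :
    ∀ {s t : Multiset α}, (∀ x ∈ s, ∀ y ∈ t, f x = f y → x = y) →
      s.map f = t.map f → s = t := by
  intro s
  induction s using Multiset.induction with
  | empty =>
    intro t _ h
    simp only [Multiset.map_zero] at h
    have := congrArg Multiset.card h
    simp at this
    exact (Multiset.card_eq_zero.mp this.symm).symm
  | cons a s ih =>
    intro t hinj h
    classical
    have hfa : f a ∈ t.map f := by
      rw [← h]; simp
    obtain ⟨b, hb, hfb⟩ := Multiset.mem_map.mp hfa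
    have hab : a = b := hinj a (Multiset.mem_cons_self a s) b hb hfb.symm
    subst hab
    have ht : t = a ::ₘ t.erase a := (Multiset.cons_erase hb).symm
    rw [ht, Multiset.map_cons, Multiset.map_cons] at h
    have h' := (Multiset.cons_inj_right _).mp h
    have := ih (fun x hx y hy => hinj x (Multiset.mem_cons_of_mem hx) y
      (Multiset.mem_of_mem_erase hy)) h'
    rw [ht, this]

/-- Equality of multisets of values yields a permutation intertwining the tuples. -/
lemma exists_perm_comp_eq {n : ℕ} {α : Type*} {X Y : Fin n → α}
    (h : Multiset.map X Finset.univ.val = Multiset.map Y Finset.univ.val) :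
    ∃ σ : Equiv.Perm (Fin n), Y = X ∘ σ := by
  classical
  have key : ∀ (g : Fin n → α) (c : α), Fintype.card {i // g i = c} =
      Multiset.card ((Finset.univ.val).filter fun a => c = g a) := by
    intro g c
    rw [Fintype.card_subtype, Finset.card, Finset.filter_val]
    congr 1
    exact Multiset.filter_congr fun x _ => eq_comm
  have hc : ∀ c : α, Fintype.card {i // Y i = c} = Fintype.card {i // X i = c} := by
    intro c
    have hcount := congrArg (Multiset.count c) h
    rw [Multiset.count_map, Multiset.count_map] at hcount
    rw [key, key, hcount]
  let σ := Equiv.ofFiberEquiv (f := Y) (g := X) (fun c => Fintype.equivOfCardEq (hc c))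
  exact ⟨σ, funext fun i => (Equiv.ofFiberEquiv_map _ i).symm⟩

/-- The power sums `p_1, …, p_n` of `n` real numbers determine their multiset. -/
lemma multiset_eq_of_psum_eq {n : ℕ} (a b : Fin n → ℝ)
    (h : ∀ m, 1 ≤ m → m ≤ n → ∑ i, a i ^ m = ∑ i, b i ^ m) :
    Multiset.map a Finset.univ.val = Multiset.map b Finset.univ.val := by
  classical
  have hpsum : ∀ m, 1 ≤ m → m ≤ n →
      eval a (psum (Fin n) ℝ m) = eval b (psum (Fin n) ℝ m) := by
    intro m h1 h2
    simpa [psum] using h m h1 h2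
  -- elementary symmetric polynomials agree up to degree n, by Newton's identities
  have hesymm : ∀ m, m ≤ n →
      eval a (esymm (Fin n) ℝ m) = eval b (esymm (Fin n) ℝ m) := by
    intro m
    induction m using Nat.strong_induction_on with
    | _ m ih =>
      intro hm
      rcases Nat.eq_zero_or_pos m with h0 | h0
      · subst h0; simp [esymm_zero]
      · have hnewton := mul_esymm_eq_sum (Fin n) ℝ m
        have ha := congrArg (eval a) hnewton
        have hb := congrArg (eval b) hnewton
        simp only [map_mul, map_natCast, map_pow, map_neg, map_one, map_sum] at ha hb
        have hsum : ∑ p ∈ (antidiagonal m).filter (fun p => p.1 < m),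
              (-1:ℝ) ^ p.1 * eval a (esymm (Fin n) ℝ p.1) * eval a (psum (Fin n) ℝ p.2)
            = ∑ p ∈ (antidiagonal m).filter (fun p => p.1 < m),
              (-1:ℝ) ^ p.1 * eval b (esymm (Fin n) ℝ p.1) * eval b (psum (Fin n) ℝ p.2) := by
          refine Finset.sum_congr rfl fun p hp => ?_
          simp only [Finset.mem_filter, Finset.HasAntidiagonal.mem_antidiagonal] at hp
          obtain ⟨hpsum', hlt⟩ := hp
          have h1 : eval a (esymm (Fin n) ℝ p.1) = eval b (esymm (Fin n) ℝ p.1) :=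
            ih p.1 hlt (le_trans (le_of_lt hlt) hm)
          have h2 : eval a (psum (Fin n) ℝ p.2) = eval b (psum (Fin n) ℝ p.2) := by
            refine hpsum p.2 ?_ ?_
            · omega
            · omega
          rw [h1, h2]
        have hm0 : (m : ℝ) ≠ 0 := Nat.cast_ne_zero.mpr h0.ne'
        apply mul_left_cancel₀ hm0
        rw [ha, hb, hsum]
  -- elementary symmetric values of the multisets agree
  have hA : ∀ m, m ≤ n → (Multiset.map a Finset.univ.val).esymm m
      = (Multiset.map b Finset.univ.val).esymm m := by
    intro m hm
    have ea := aeval_esymm_eq_multiset_esymm (Fin n) ℝ (S := ℝ) m a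
    have eb := aeval_esymm_eq_multiset_esymm (Fin n) ℝ (S := ℝ) m b
    have haev : ∀ (f : Fin n → ℝ) (p : MvPolynomial (Fin n) ℝ), aeval f p = eval f p := by
      intro f p
      rw [aeval_def, Algebra.algebraMap_self, eval₂_id]
    rw [haev] at ea eb
    rw [← ea, ← eb, hesymm m hm]
  -- Vieta: the monic polynomials with these roots coincide, hence so do the multisets
  set A := Multiset.map a Finset.univ.val with hAdef
  set B := Multiset.map b Finset.univ.val with hBdef
  have hcardA : Multiset.card A = n := by simp [hAdef]
  have hcardB : Multiset.card B = n := by simp [hBdef]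
  have hprod : (A.map fun r => Polynomial.X - Polynomial.C r).prod
      = (B.map fun r => Polynomial.X - Polynomial.C r).prod := by
    rw [Multiset.prod_X_sub_X_eq_sum_esymm, Multiset.prod_X_sub_X_eq_sum_esymm,
      hcardA, hcardB]
    refine Finset.sum_congr rfl fun j hj => ?_
    rw [Finset.mem_range] at hj
    rw [hA j (Nat.lt_succ_iff.mp hj)]
  have := congrArg Polynomial.roots hprod
  rwa [Polynomial.roots_multiset_prod_X_sub_C, Polynomial.roots_multiset_prod_X_sub_C] at this

/-- A nonzero linear form, as a multivariate polynomial. -/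
lemma linear_ne_zero {k : ℕ} {d : Fin k → ℝ} (hd : d ≠ 0) :
    (∑ j, C (d j) * X j : MvPolynomial (Fin k) ℝ) ≠ 0 := by
  classical
  obtain ⟨j, hj⟩ : ∃ j, d j ≠ 0 := by
    by_contra hc
    push_neg at hc
    exact hd (funext hc)
  intro h0
  have := congrArg (coeff (Finsupp.single j 1)) h0
  rw [coeff_zero, coeff_sum] at this
  simp only [coeff_C_mul, coeff_X'] at this
  rw [Finset.sum_eq_single j] at this
  · simp at this; exact hj this
  · intro b _ hbj
    rw [if_neg, mul_zero]
    exact fun hs => hbj ((Finsupp.single_left_inj one_ne_zero).mp hs)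
  · simp

/-- A linear functional separating finitely many points of `ℝ^k`. -/
lemma exists_separating {k : ℕ} (S : Finset (Fin k → ℝ)) :
    ∃ t : Fin k → ℝ, ∀ u ∈ S, ∀ v ∈ S, (∑ j, t j * u j) = (∑ j, t j * v j) → u = v := by
  classical
  set P : MvPolynomial (Fin k) ℝ :=
    ∏ p ∈ (S ×ˢ S).filter (fun p => p.1 ≠ p.2), ∑ j, C (p.1 j - p.2 j) * X j with hP
  have hPne : P ≠ 0 := by
    rw [hP]
    rw [Finset.prod_ne_zero_iff]
    intro p hp
    rw [Finset.mem_filter] at hp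
    exact linear_ne_zero (d := p.1 - p.2) (sub_ne_zero.mpr hp.2)
  obtain ⟨t, ht⟩ : ∃ t : Fin k → ℝ, eval t P ≠ 0 := by
    by_contra hc
    push_neg at hc
    exact hPne (MvPolynomial.funext fun x => by rw [hc x, map_zero])
  refine ⟨t, fun u hu v hv heq => ?_⟩
  by_contra hne
  rw [hP, map_prod] at ht
  have := Finset.prod_ne_zero_iff.mp ht (u, v)
    (Finset.mem_filter.mpr ⟨Finset.mem_product.mpr ⟨hu, hv⟩, hne⟩)
  apply this
  rw [map_sum]
  simp only [map_mul, eval_C, eval_X]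
  have : ∑ j, (u j - v j) * t j = ∑ j, t j * u j - ∑ j, t j * v j := by
    rw [← Finset.sum_sub_distrib]
    congr 1; ext j; ring
  rw [this, heq, sub_self]

/-- The power-sum multi-symmetric polynomials of degree at most `n` determine the
multiset of rows: `Y` is a row-permutation of `X` iff `s_α(X) = s_α(Y)` for all
multi-indices `α` with `|α| ≤ n`. -/
theorem powersum_characterizes_rows (n k : ℕ) (X Y : Fin n → Fin k → ℝ) :
    (∃ σ : Equiv.Perm (Fin n), Y = permRow σ X) ↔
      ∀ α : Fin k → ℕ, (∑ j, α j) ≤ n →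
        (∑ i, ∏ j, X i j ^ α j) = ∑ i, ∏ j, Y i j ^ α j := by
  classical
  constructor
  · rintro ⟨σ, rfl⟩ α _
    simp only [permRow]
    exact (Equiv.sum_comp σ⁻¹ (fun i => ∏ j, X i j ^ α j)).symm
  · intro h
    -- a separating linear functional for all rows of X and Y
    obtain ⟨t, ht⟩ := exists_separating
      ((Finset.univ.image X) ∪ (Finset.univ.image Y))
    -- power sums of the projected rows agree up to degree n
    have expand : ∀ (Z : Fin n → Fin k → ℝ) (m : ℕ),
        ∑ i, (∑ j, t j * Z i j) ^ m
        = ∑ α ∈ Finset.piAntidiag Finset.univ m,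
            ((Nat.multinomial Finset.univ α : ℝ) * ∏ j, t j ^ α j) *
              ∑ i, ∏ j, Z i j ^ α j := by
      intro Z m
      calc ∑ i, (∑ j, t j * Z i j) ^ m
          = ∑ i, ∑ α ∈ Finset.piAntidiag Finset.univ m,
              (Nat.multinomial Finset.univ α : ℝ) * ∏ j, (t j * Z i j) ^ α j := by
            refine Finset.sum_congr rfl fun i _ => ?_
            exact Finset.sum_pow_eq_sum_piAntidiag _ _ m
        _ = ∑ α ∈ Finset.piAntidiag Finset.univ m, ∑ i,
              (Nat.multinomial Finset.univ α : ℝ) * ∏ j, (t j * Z i j) ^ α j :=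
            Finset.sum_comm
        _ = _ := by
            refine Finset.sum_congr rfl fun α _ => ?_
            simp_rw [mul_pow, Finset.prod_mul_distrib, ← mul_assoc]
            rw [← Finset.mul_sum]
    have hpow : ∀ m, 1 ≤ m → m ≤ n →
        ∑ i, (∑ j, t j * X i j) ^ m = ∑ i, (∑ j, t j * Y i j) ^ m := by
      intro m _ hmn
      rw [expand X m, expand Y m]
      refine Finset.sum_congr rfl fun α hα => ?_
      rw [Finset.mem_piAntidiag] at hα
      rw [h α (hα.1.le.trans hmn)]
    -- hence the multisets of projected rows agree
    have hmultproj := multiset_eq_of_psum_eq _ _ hpow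
    rw [show (fun i => ∑ j, t j * X i j) = (fun x : Fin k → ℝ => ∑ j, t j * x j) ∘ X from rfl,
      show (fun i => ∑ j, t j * Y i j) = (fun x : Fin k → ℝ => ∑ j, t j * x j) ∘ Y from rfl,
      ← Multiset.map_map, ← Multiset.map_map] at hmultproj
    -- cancel the separating functional
    have hmult : Multiset.map X Finset.univ.val = Multiset.map Y Finset.univ.val := by
      refine multiset_map_eq_of_injOn ?_ hmultproj
      intro x hx y hy hxy
      obtain ⟨i, _, rfl⟩ := Multiset.mem_map.mp hx
      obtain ⟨i', _, rfl⟩ := Multiset.mem_map.mp hy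
      refine ht _ ?_ _ ?_ hxy
      · exact Finset.mem_union_left _ (Finset.mem_image_of_mem X (Finset.mem_univ i))
      · exact Finset.mem_union_right _ (Finset.mem_image_of_mem Y (Finset.mem_univ i'))
    obtain ⟨σ, hσ⟩ := exists_perm_comp_eq hmult
    refine ⟨σ⁻¹, funext fun i => ?_⟩
    simp only [permRow, inv_inv, hσ, Function.comp_apply]
end

section
/- Let σ ∈ S_n be the inverse of the cycle (1 2 ... n) and for a polynomial p : ℝ^(n×k) → ℝ define ⌈p⌉(X) = (p(X), p(σ·X), p(σ²·X), ..., p(σ^{n−1}·X))ᵀ. If p is invariant under permutations of the last n−1 rows of X, then ⌈p⌉ is a permutation-equivariant map ℝ^(n×k) → ℝ^n. -/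
open Fin.CommRing

lemma permRow_comp {n k : ℕ} (a b : Equiv.Perm (Fin n)) (X : Fin n → Fin k → ℝ) :
    permRow a (permRow b X) = permRow (a * b) X := by
  funext m
  simp [permRow, mul_inv_rev]

lemma finRotate_pow {n : ℕ} [NeZero n] (j : ℕ) (m : Fin n) :
    ((finRotate n) ^ j) m = m + (j : Fin n) := by
  obtain ⟨n, rfl⟩ := Nat.exists_eq_succ_of_ne_zero (NeZero.ne n)
  induction j generalizing m with
  | zero => simp
  | succ j ih =>
      rw [pow_succ, Equiv.Perm.mul_apply, finRotate_succ_apply, ih]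
      push_cast
      ring

/-- For `p` invariant under permutations of the last `n-1` rows, the map
`⌈p⌉(X)_i = p(σ^{i} · X)` (with `σ` the inverse of the cycle `(1 2 … n)`) is
permutation equivariant. -/
theorem ceil_p_equivariant (n k : ℕ) [NeZero n]
    (p : MvPolynomial (Fin n × Fin k) ℝ)
    (hinv : ∀ σ : Equiv.Perm (Fin n), σ 0 = 0 → ∀ X : Fin n → Fin k → ℝ,
      evalP (permRow σ X) p = evalP X p)
    (ceilp : (Fin n → Fin k → ℝ) → Fin n → ℝ)
    (hceilp : ceilp = fun X i => evalP (permRow ((finRotate n)⁻¹ ^ i.1) X) p) :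
    ∀ (τ : Equiv.Perm (Fin n)) (X : Fin n → Fin k → ℝ) (i : Fin n),
      ceilp (permRow τ X) i = ceilp X (τ⁻¹ i) := by
  subst hceilp
  intro τ X i
  simp only
  set r : Equiv.Perm (Fin n) := finRotate n with hr
  set j : ℕ := ((τ⁻¹ i).1) with hj
  set g : Equiv.Perm (Fin n) := r⁻¹ ^ i.1 * τ * r ^ j with hg
  have hg0 : g 0 = 0 := by
    have h1 : (r ^ j) 0 = τ⁻¹ i := by
      rw [finRotate_pow]
      simp [hj, Fin.cast_val_eq_self]
    have h2 : (r ^ i.1) 0 = i := by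
      rw [finRotate_pow]
      simp [Fin.cast_val_eq_self]
    have h3 : (r⁻¹ ^ i.1) i = 0 := by
      rw [inv_pow]
      exact Equiv.Perm.inv_eq_iff_eq.mpr h2.symm
    simp only [hg, Equiv.Perm.mul_apply, h1]
    erw [Equiv.apply_symm_apply]
    exact h3
  have key : r⁻¹ ^ i.1 * τ = g * r⁻¹ ^ j := by
    rw [hg]; group
  calc evalP (permRow (r⁻¹ ^ i.1) (permRow τ X)) p
      = evalP (permRow (g * r⁻¹ ^ j) X) p := by rw [permRow_comp, key]
    _ = evalP (permRow g (permRow (r⁻¹ ^ j) X)) p := by rw [permRow_comp]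
    _ = evalP (permRow (r⁻¹ ^ j) X) p := hinv g hg0 _
end
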